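/- arXiv:1312.0216 — 9 statements merged into one kernel-verified Lean document; each statement's English description precedes it below -/
import Mathlib

section
/- For every positive integer n, all roots of the polynomial P_n lie in the closed unit disk D_1, i.e., every z ∈ ℂ with P_n(z) = 0 satisfies |z| ≤ 1. -/
/-- The scaled `n`-th partial sum of the exponential function:
`P n z = ∑_{k=0}^n (n z)^k / k!`. -/
noncomputable def P (n : ℕ) (z : ℂ) : ℂ :=
  ∑ k ∈ Finset.range (n + 1), ((n : ℂ) * z) ^ k / (Nat.factorial k)

/-- For every positive integer `n`, all roots of `P n` lie in the closed unit disk. -/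
theorem roots_of_Pn_in_unit_disk (n : ℕ) (hn : 0 < n) (z : ℂ) (hz : P n z = 0) :
    ‖z‖ ≤ 1 := by
  by_contra hcon
  push_neg at hcon
  set r := ‖z‖ with hr
  have hr1 : (1 : ℝ) ≤ r := le_of_lt hcon
  set a : ℕ → ℝ := fun k => (n : ℝ) ^ k / (Nat.factorial k) with ha
  have hnpos : (0 : ℝ) < n := by exact_mod_cast hn
  have hapos : ∀ k, 0 < a k := fun k =>
    div_pos (pow_pos hnpos k) (by exact_mod_cast Nat.factorial_pos k)
  have hamono : ∀ k, k < n → a k ≤ a (k + 1) := by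
    intro k hk
    have hfac : (0 : ℝ) < Nat.factorial k := by exact_mod_cast Nat.factorial_pos k
    have hfac' : (0 : ℝ) < Nat.factorial (k + 1) := by exact_mod_cast Nat.factorial_pos (k + 1)
    rw [ha]
    simp only
    rw [div_le_div_iff₀ hfac hfac']
    have : ((Nat.factorial (k + 1) : ℝ)) = (k + 1) * Nat.factorial k := by
      rw [Nat.factorial_succ]; push_cast; ring
    rw [this, pow_succ]
    have hkn : (k : ℝ) + 1 ≤ n := by exact_mod_cast hk
    nlinarith [mul_le_mul_of_nonneg_left hkn (le_of_lt (mul_pos (pow_pos hnpos k) hfac))]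
  -- rewrite P as sum of real coefficients times powers of z
  have hP : (∑ k ∈ Finset.range (n + 1), ((a k : ℝ) : ℂ) * z ^ k) = 0 := by
    rw [← hz]
    unfold P
    apply Finset.sum_congr rfl
    intro k _
    rw [mul_pow, ha]
    push_cast
    ring
  have h1 : (∑ k ∈ Finset.range (n + 1), ((a k : ℝ) : ℂ) * z ^ (k + 1)) = 0 := by
    have : (∑ k ∈ Finset.range (n + 1), ((a k : ℝ) : ℂ) * z ^ (k + 1))
        = z * ∑ k ∈ Finset.range (n + 1), ((a k : ℝ) : ℂ) * z ^ k := by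
      rw [Finset.mul_sum]
      apply Finset.sum_congr rfl
      intro k _
      ring
    rw [this, hP, mul_zero]
  have e1 := Finset.sum_range_succ (fun k => ((a k : ℝ) : ℂ) * z ^ (k + 1)) n
  have e2 := Finset.sum_range_succ' (fun k => ((a k : ℝ) : ℂ) * z ^ k) n
  rw [h1] at e1
  rw [hP] at e2
  have key : ((a n : ℝ) : ℂ) * z ^ (n + 1) =
      ((a 0 : ℝ) : ℂ) + ∑ k ∈ Finset.range n, (((a (k + 1) : ℝ) : ℂ) - ((a k : ℝ) : ℂ)) * z ^ (k + 1) := by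
    have hsplit : ∑ k ∈ Finset.range n, (((a (k + 1) : ℝ) : ℂ) - ((a k : ℝ) : ℂ)) * z ^ (k + 1)
        = (∑ k ∈ Finset.range n, ((a (k + 1) : ℝ) : ℂ) * z ^ (k + 1))
          - ∑ k ∈ Finset.range n, ((a k : ℝ) : ℂ) * z ^ (k + 1) := by
      rw [← Finset.sum_sub_distrib]
      apply Finset.sum_congr rfl
      intro k _
      ring
    rw [hsplit]
    simp only [pow_zero, mul_one] at e2
    -- e1 : 0 = ∑ range n (a k) z^(k+1) + a n z^(n+1)
    -- e2 : 0 = ∑ range n (a (k+1)) z^(k+1) + a 0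
    linear_combination e2 - e1
  have habs : a n * r ^ (n + 1) ≤ a 0 + ∑ k ∈ Finset.range n, (a (k + 1) - a k) * r ^ (k + 1) := by
    have h0 : a n * r ^ (n + 1) = ‖((a n : ℝ) : ℂ) * z ^ (n + 1)‖ := by
      rw [norm_mul, norm_pow, Complex.norm_real, Real.norm_eq_abs, abs_of_pos (hapos n), hr]
    rw [h0, key]
    refine le_trans (norm_add_le _ _) ?_
    gcongr
    · simp [Complex.norm_real, abs_of_pos (hapos 0)]
    refine le_trans (norm_sum_le _ _) ?_
    apply Finset.sum_le_sum
    intro k hk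
    rw [norm_mul, norm_pow]
    have : ‖((a (k + 1) : ℝ) : ℂ) - ((a k : ℝ) : ℂ)‖ = a (k + 1) - a k := by
      rw [← Complex.ofReal_sub, Complex.norm_real, Real.norm_eq_abs,
        abs_of_nonneg (sub_nonneg.mpr (hamono k (Finset.mem_range.mp hk)))]
    rw [this, hr]
  have hbound : a 0 + ∑ k ∈ Finset.range n, (a (k + 1) - a k) * r ^ (k + 1)
      ≤ (a 0 + ∑ k ∈ Finset.range n, (a (k + 1) - a k)) * r ^ n := by
    rw [add_mul, Finset.sum_mul]
    refine add_le_add (le_mul_of_one_le_right (hapos 0).le (one_le_pow₀ hr1)) ?_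
    refine Finset.sum_le_sum fun k hk => ?_
    exact mul_le_mul_of_nonneg_left
      (pow_le_pow_right₀ hr1 (Finset.mem_range.mp hk))
      (sub_nonneg.mpr (hamono k (Finset.mem_range.mp hk)))
  have htel : a 0 + ∑ k ∈ Finset.range n, (a (k + 1) - a k) = a n := by
    rw [Finset.sum_range_sub a n]
    ring
  rw [htel] at hbound
  have hfinal : a n * r ^ (n + 1) ≤ a n * r ^ n := le_trans habs hbound
  have hrn : (0 : ℝ) < r ^ n := pow_pos (lt_trans one_pos hcon) n
  rw [pow_succ] at hfinal
  nlinarith [mul_pos (hapos n) hrn]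
end

section
/- For each ε ∈ (0,1) and each positive integer n with n ≥ (1.0085·e/ε)², the scaled stability region S_n is contained in the closed disk D_{1+ε}, i.e., every z ∈ ℂ with |P_n(z)| ≤ 1 satisfies |z| ≤ 1 + ε. -/
open Finset

lemma fact_le_aux (d k : ℕ) : (k + d).factorial ≤ k.factorial * (k + d) ^ d := by
  induction d with
  | zero => simp
  | succ d ih =>
    have h1 : (k + (d+1)).factorial = (k + d + 1) * (k + d).factorial := rfl
    rw [h1]
    calc (k + d + 1) * (k + d).factorial
        ≤ (k + d + 1) * (k.factorial * (k + d) ^ d) := Nat.mul_le_mul_left _ ih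
      _ ≤ (k + d + 1) * (k.factorial * (k + d + 1) ^ d) :=
          Nat.mul_le_mul_left _ (Nat.mul_le_mul_left _ (Nat.pow_le_pow_left (Nat.le_succ _) d))
      _ = k.factorial * (k + (d+1)) ^ (d+1) := by ring

lemma ratio_le (n k : ℕ) (hk : k ≤ n) (hn : 0 < n) :
    (n:ℝ)^k / k.factorial ≤ (n:ℝ)^n / n.factorial := by
  have hnp : (0:ℝ) < n := by exact_mod_cast hn
  rw [div_le_div_iff₀ (by positivity) (by positivity)]
  have h := fact_le_aux (n - k) k
  rw [Nat.add_sub_cancel' hk] at h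
  have h' : (n.factorial:ℝ) ≤ k.factorial * (n:ℝ)^(n-k) := by exact_mod_cast h
  calc (n:ℝ)^k * n.factorial ≤ (n:ℝ)^k * (k.factorial * (n:ℝ)^(n-k)) := by
        apply mul_le_mul_of_nonneg_left h' (by positivity)
    _ = (n:ℝ)^(k + (n-k)) * k.factorial := by rw [pow_add]; ring
    _ = (n:ℝ)^n * k.factorial := by rw [Nat.add_sub_cancel' hk]

lemma geom_id (q : ℝ) (m : ℕ) :
    (1 - q)^2 * ∑ j ∈ range m, (j:ℝ) * q^j = q - q^m * (m * (1-q) + q) := by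
  induction m with
  | zero => simp
  | succ m ih =>
    rw [sum_range_succ, mul_add, ih]
    push_cast
    ring

lemma geom_le' (q : ℝ) (h0 : 0 ≤ q) (h1 : q < 1) (m : ℕ) :
    ∑ j ∈ range m, (j:ℝ) * q^j ≤ q / (1-q)^2 := by
  have hq : (0:ℝ) < (1-q)^2 := by nlinarith
  rw [le_div_iff₀ hq]
  have hid := geom_id q m
  have hm : (0:ℝ) ≤ (m:ℝ) := Nat.cast_nonneg m
  have hnn : 0 ≤ q^m * ((m:ℝ) * (1-q) + q) := by
    apply mul_nonneg (pow_nonneg h0 m)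
    nlinarith
  nlinarith

lemma two_pow_fact (n : ℕ) : (2:ℝ)^n * (n+1).factorial ≤ ((n:ℝ)+1)^(n+1) := by
  induction n with
  | zero => simp
  | succ n ih =>
    have hp : (0:ℝ) < (n:ℝ)+1 := by positivity
    have key : 2 * ((n:ℝ)+1)^(n+1) ≤ ((n:ℝ)+2)^(n+1) := by
      have h1 : 1 + ((n:ℝ)+1) * (1/((n:ℝ)+1)) ≤ (1 + 1/((n:ℝ)+1))^(n+1) := by
        have := one_add_mul_le_pow (a := 1/((n:ℝ)+1))
          (by nlinarith [one_div_nonneg.mpr hp.le]) (n+1)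
        have e : ((n+1:ℕ):ℝ) = (n:ℝ)+1 := by push_cast; ring
        rw [e] at this; exact this
      have h2 : ((n:ℝ)+2)^(n+1) = ((n:ℝ)+1)^(n+1) * (1 + 1/((n:ℝ)+1))^(n+1) := by
        rw [← mul_pow]
        congr 1
        field_simp
        ring
      rw [h2]
      have h3 : 1 + ((n:ℝ)+1) * (1/((n:ℝ)+1)) = 2 := by field_simp; ring
      rw [h3] at h1
      nlinarith [pow_pos hp (n+1)]
    push_cast
    have hfs : ((n+1+1).factorial : ℝ) = ((n:ℝ)+2) * (n+1).factorial := by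
      rw [Nat.factorial_succ]; push_cast; ring
    calc (2:ℝ)^(n+1) * ((n+1)+1).factorial
        = (2:ℝ)^n * (n+1).factorial * (2 * ((n:ℝ)+2)) := by
          rw [show ((n+1)+1).factorial = (n+2) * (n+1).factorial from rfl]
          push_cast; ring
      _ ≤ ((n:ℝ)+1)^(n+1) * (2 * ((n:ℝ)+2)) := by
          apply mul_le_mul_of_nonneg_right ih (by positivity)
      _ = (2 * ((n:ℝ)+1)^(n+1)) * ((n:ℝ)+2) := by ring
      _ ≤ ((n:ℝ)+2)^(n+1) * ((n:ℝ)+2) := by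
          apply mul_le_mul_of_nonneg_right key (by positivity)
      _ = ((n:ℝ)+1+1)^(n+1+1) := by ring

lemma key_id (n : ℕ) (hn : 0 < n) (z : ℂ) :
    (z - 1) * P n z =
      (n:ℂ)^n / (Nat.factorial n) * z^(n+1)
      - ∑ k ∈ range (n+1), (((n:ℂ) - k) * (n:ℂ)^k / ((n:ℂ) * (Nat.factorial k))) * z^k := by
  have hn0 : (n:ℂ) ≠ 0 := Nat.cast_ne_zero.2 hn.ne'
  set a : ℕ → ℂ := fun k => (n:ℂ)^k / (Nat.factorial k) with ha_def
  set g : ℕ → ℂ := fun k => ((n:ℂ) - k) * (n:ℂ)^k / ((n:ℂ) * (Nat.factorial k)) with hg_def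
  have hP : P n z = ∑ k ∈ range (n+1), a k * z^k := by
    unfold P
    refine sum_congr rfl fun k _ => ?_
    rw [mul_pow, ha_def]
    ring
  have e0 : (z - 1) * P n z
      = ∑ k ∈ range (n+1), a k * z^(k+1) - ∑ k ∈ range (n+1), a k * z^k := by
    rw [hP, sub_mul, one_mul, mul_sum]
    congr 1
    exact sum_congr rfl fun k _ => by ring
  have e1 : ∑ k ∈ range (n+1), a k * z^(k+1)
      = a n * z^(n+1) + ∑ k ∈ range n, a k * z^(k+1) := by
    rw [sum_range_succ]; ring
  have e2 : ∑ k ∈ range (n+1), a k * z^k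
      = (∑ k ∈ range n, a (k+1) * z^(k+1)) + 1 := by
    rw [sum_range_succ']
    congr 1
    simp [ha_def]
  have e3 : ∑ k ∈ range (n+1), g k * z^k
      = (∑ k ∈ range n, g (k+1) * z^(k+1)) + 1 := by
    rw [sum_range_succ']
    congr 1
    simp [hg_def, hn0]
  have e4 : ∑ k ∈ range n, a k * z^(k+1) - ∑ k ∈ range n, a (k+1) * z^(k+1)
      = - ∑ k ∈ range n, g (k+1) * z^(k+1) := by
    rw [← sum_sub_distrib, ← sum_neg_distrib]
    refine sum_congr rfl fun k _ => ?_
    have hf : ((k+1).factorial : ℂ) = (k+1) * (k.factorial : ℂ) := by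
      rw [Nat.factorial_succ]; push_cast; ring
    have hfk : (k.factorial : ℂ) ≠ 0 := Nat.cast_ne_zero.2 (Nat.factorial_ne_zero k)
    have hk1 : ((k:ℂ)+1) ≠ 0 := Nat.cast_add_one_ne_zero k
    simp only [ha_def, hg_def, hf]
    push_cast
    field_simp
    ring
  have han : a n = (n:ℂ)^n / (Nat.factorial n) := rfl
  rw [e0, e1, e2]
  linear_combination han * z^(n+1) + e4 + e3

set_option maxHeartbeats 1000000 in
/-- For each `ε ∈ (0,1)` and each positive integer `n ≥ (1.0085 e / ε)²`,
the scaled stability region `S_n` is contained in the closed disk of radius `1 + ε`. -/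
theorem Sn_subset_D_one_add_eps (ε : ℝ) (hε0 : 0 < ε) (hε1 : ε < 1)
    (n : ℕ) (hn : 0 < n) (hn0 : (1.0085 * Real.exp 1 / ε) ^ 2 ≤ (n : ℝ))
    (z : ℂ) (hz : ‖P n z‖ ≤ 1) :
    ‖z‖ ≤ 1 + ε := by
  by_contra hcon
  push_neg at hcon
  set r : ℝ := ‖z‖ with hr_def
  have hr : 1 + ε < r := hcon
  have hr1 : (1:ℝ) < r := by linarith
  have hr0 : (0:ℝ) < r := by linarith
  have he : (2.7182818283 : ℝ) < Real.exp 1 := Real.exp_one_gt_d9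
  set c : ℝ := 1.0085 * Real.exp 1 with hc_def
  have hc : (2.74 : ℝ) < c := by rw [hc_def]; nlinarith
  have hc2 : (7.5 : ℝ) < c^2 := by nlinarith
  have hnpos : (0:ℝ) < (n:ℝ) := by exact_mod_cast hn
  have hnc : c^2 ≤ (n:ℝ) * ε^2 := by
    have h := hn0
    rw [div_pow] at h
    have h2 : c^2/ε^2 * ε^2 ≤ (n:ℝ) * ε^2 :=
      mul_le_mul_of_nonneg_right h (sq_nonneg ε)
    have h3 : c^2/ε^2 * ε^2 = c^2 := by field_simp
    linarith
  have hn8R : (7.5:ℝ) < (n:ℝ) := by nlinarith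
  have hn8 : 8 ≤ n := by
    by_contra hh
    push_neg at hh
    have : (n:ℝ) ≤ 7 := by exact_mod_cast Nat.lt_succ_iff.mp hh
    linarith
  have hfact_pos : (0:ℝ) < (n.factorial : ℝ) := by exact_mod_cast Nat.factorial_pos n
  set T : ℝ := (n:ℝ)^n / (n.factorial : ℝ) with hT_def
  have hTpos : 0 < T := by positivity
  -- T ≥ 128
  have h2T : (2:ℝ)^(n-1) ≤ T := by
    have h := two_pow_fact (n-1)
    have hnn : n - 1 + 1 = n := Nat.succ_pred_eq_of_pos hn
    rw [hnn] at h
    have hcast : ((n-1:ℕ):ℝ) + 1 = (n:ℝ) := by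
      have h1 : ((n-1:ℕ):ℝ) = (n:ℝ) - 1 := by
        rw [Nat.cast_sub hn]; norm_num
      rw [h1]; ring
    rw [hcast] at h
    rw [hT_def, le_div_iff₀ hfact_pos]
    linarith
  have hT128 : (128:ℝ) ≤ T := by
    have h1 : (2:ℝ)^7 ≤ (2:ℝ)^(n-1) := pow_le_pow_right₀ one_le_two (by omega)
    norm_num at h1
    linarith
  -- the geometric ratio
  set q : ℝ := 1/r with hq_def
  have hq0 : (0:ℝ) ≤ q := by positivity
  have hq1 : q < 1 := by rw [hq_def, div_lt_one hr0]; exact hr1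
  -- termwise bound for the sum in the key identity
  have habs_term : ∀ k ∈ range (n+1),
      ‖(((n:ℂ) - k) * (n:ℂ)^k / ((n:ℂ) * (Nat.factorial k))) * z^k‖
        ≤ ((n-k:ℕ):ℝ)/(n:ℝ) * T * r^k := by
    intro k hk
    have hkn : k ≤ n := Nat.lt_succ_iff.mp (mem_range.mp hk)
    have hcast : ((n:ℂ) - k) = ((n - k : ℕ):ℂ) := by
      push_cast [Nat.cast_sub hkn]
      ring
    rw [hcast]
    have habs : ‖((n - k : ℕ):ℂ) * (n:ℂ)^k / ((n:ℂ) * (Nat.factorial k)) * z^k‖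
        = ((n-k:ℕ):ℝ) * (n:ℝ)^k / ((n:ℝ) * (Nat.factorial k)) * r^k := by
      simp [norm_mul, norm_div, norm_pow, Complex.norm_natCast, hr_def]
    rw [habs]
    have h1 : ((n-k:ℕ):ℝ) * (n:ℝ)^k / ((n:ℝ) * (Nat.factorial k))
        = ((n-k:ℕ):ℝ)/(n:ℝ) * ((n:ℝ)^k / (Nat.factorial k)) := by ring
    rw [h1]
    apply mul_le_mul_of_nonneg_right _ (pow_nonneg hr0.le k)
    apply mul_le_mul_of_nonneg_left (ratio_le n k hkn hn) (by positivity)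
  -- reflect and compare with geometric series
  have hreflect : ∑ k ∈ range (n+1), ((n-k:ℕ):ℝ)/(n:ℝ) * T * r^k
      = ∑ j ∈ range (n+1), (j:ℝ)/(n:ℝ) * T * r^(n-j) := by
    rw [← Finset.sum_range_reflect (fun k => ((n-k:ℕ):ℝ)/(n:ℝ) * T * r^k) (n+1)]
    refine sum_congr rfl fun j hj => ?_
    have hjn : j ≤ n := Nat.lt_succ_iff.mp (mem_range.mp hj)
    rw [show n + 1 - 1 - j = n - j from by omega, Nat.sub_sub_self hjn]
  have hpow : ∀ j ≤ n, r^(n-j) = r^n * q^j := by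
    intro j hj
    rw [hq_def, div_pow, one_pow, mul_one_div, eq_div_iff (by positivity)]
    rw [← pow_add, Nat.sub_add_cancel hj]
  have hsum2 : ∑ j ∈ range (n+1), (j:ℝ)/(n:ℝ) * T * r^(n-j)
      = T * r^n / (n:ℝ) * ∑ j ∈ range (n+1), (j:ℝ) * q^j := by
    rw [mul_sum]
    refine sum_congr rfl fun j hj => ?_
    rw [hpow j (Nat.lt_succ_iff.mp (mem_range.mp hj))]
    ring
  have hgeom := geom_le' q hq0 hq1 (n+1)
  have hrne : r - 1 ≠ 0 := by linarith
  have hqq : q / (1-q)^2 = r / (r-1)^2 := by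
    rw [hq_def]
    field_simp
  have hmono : r / (r-1)^2 ≤ (1+ε)/ε^2 := by
    have ha : (0:ℝ) ≤ r - 1 - ε := by linarith
    have hb : (0:ℝ) ≤ r - 1 + ε + ε*(r-1) := by
      have := mul_nonneg hε0.le (show (0:ℝ) ≤ r - 1 by linarith)
      linarith
    rw [div_le_div_iff₀ (by nlinarith) (by positivity)]
    nlinarith [mul_nonneg ha hb]
  have hfrac : (1+ε)/ε^2 / (n:ℝ) ≤ 0.27 := by
    rw [div_div, div_le_iff₀ (by positivity)]
    nlinarith
  have hkey : r/(r-1)^2 / (n:ℝ) ≤ 0.27 := by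
    calc r/(r-1)^2 / (n:ℝ) ≤ (1+ε)/ε^2 / (n:ℝ) := by gcongr
      _ ≤ 0.27 := hfrac
  -- bound the absolute value of the sum
  have hSb : ‖∑ k ∈ range (n+1),
        (((n:ℂ) - k) * (n:ℂ)^k / ((n:ℂ) * (Nat.factorial k))) * z^k‖
      ≤ T * r^n * 0.27 := by
    calc ‖∑ k ∈ range (n+1),
          (((n:ℂ) - k) * (n:ℂ)^k / ((n:ℂ) * (Nat.factorial k))) * z^k‖
        ≤ ∑ k ∈ range (n+1),
            ‖(((n:ℂ) - k) * (n:ℂ)^k / ((n:ℂ) * (Nat.factorial k))) * z^k‖ :=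
          norm_sum_le _ _
      _ ≤ ∑ k ∈ range (n+1), ((n-k:ℕ):ℝ)/(n:ℝ) * T * r^k := sum_le_sum habs_term
      _ = T * r^n / (n:ℝ) * ∑ j ∈ range (n+1), (j:ℝ) * q^j := by rw [hreflect, hsum2]
      _ ≤ T * r^n / (n:ℝ) * (q / (1-q)^2) := by
          apply mul_le_mul_of_nonneg_left hgeom (by positivity)
      _ = T * r^n * (r/(r-1)^2 / (n:ℝ)) := by rw [hqq]; ring
      _ ≤ T * r^n * 0.27 := by
          apply mul_le_mul_of_nonneg_left hkey (by positivity)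
  -- lower bound for |(z-1) P n z|
  have hA : ‖(n:ℂ)^n / (Nat.factorial n) * z^(n+1)‖ = T * r^(n+1) := by
    rw [hT_def]
    simp [norm_mul, norm_div, norm_pow, Complex.norm_natCast, hr_def]
  have hlow : T * r^(n+1) - T * r^n * 0.27 ≤ ‖(z-1) * P n z‖ := by
    rw [key_id n hn z]
    set A : ℂ := (n:ℂ)^n / (Nat.factorial n) * z^(n+1) with hA_def
    set B : ℂ := ∑ k ∈ range (n+1),
      (((n:ℂ) - k) * (n:ℂ)^k / ((n:ℂ) * (Nat.factorial k))) * z^k with hB_def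
    have htri : ‖A‖ - ‖B‖ ≤ ‖A - B‖ := by
      have h := norm_add_le (A - B) B
      simp only [sub_add_cancel] at h
      linarith
    rw [hA] at htri
    linarith
  -- upper bound
  have hup : ‖(z-1) * P n z‖ ≤ r + 1 := by
    rw [norm_mul]
    have h1 : ‖z-1‖ ≤ r + 1 := by
      calc ‖z-1‖ ≤ ‖z‖ + ‖(-1:ℂ)‖ := by
            rw [sub_eq_add_neg]; exact norm_add_le z (-1)
        _ = r + 1 := by simp [hr_def]
    calc ‖z-1‖ * ‖P n z‖ ≤ (r+1) * 1 :=
          mul_le_mul h1 hz (norm_nonneg _) (by linarith)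
      _ = r + 1 := by ring
  -- contradiction
  have hrn : r ≤ r^n := le_self_pow₀ hr1.le hn.ne'
  have hTrn : 128 * r ≤ T * r^n := by
    calc 128 * r ≤ T * r := by nlinarith
      _ ≤ T * r^n := mul_le_mul_of_nonneg_left hrn hTpos.le
  have hpowsucc : r^(n+1) = r^n * r := pow_succ r n
  rw [hpowsucc] at hlow
  nlinarith [mul_le_mul_of_nonneg_right hTrn (show (0:ℝ) ≤ r - 0.27 by linarith)]
end

section
/- For every real y and every positive integer n, the following explicit formulas hold: E_n(y) = −(y^{n+1}/n!) ∑_{k=1}^{n/2} (−1)^{k+1} y^{2k−1} / ((2k−1)!·(k+n/2)) if n ≡ 0 (mod 4); E_n(y) = (y^{n+1}/n!) ∑_{k=0}^{(n−1)/2} (−1)^k y^{2k} / ((2k)!·(k+(n+1)/2)) if n ≡ 1 (mod 4); E_n(y) = (y^{n+1}/n!) ∑_{k=1}^{n/2} (−1)^{k+1} y^{2k−1} / ((2k−1)!·(k+n/2)) if n ≡ 2 (mod 4); and E_n(y) = −(y^{n+1}/n!) ∑_{k=0}^{(n−1)/2} (−1)^k y^{2k} / ((2k)!·(k+(n+1)/2))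 if n ≡ 3 (mod 4). -/
open Finset

/-- The `E`-polynomial: `E n y = |∑_{k=0}^n (i y)^k / k!|² - 1`. -/
noncomputable def E (n : ℕ) (y : ℝ) : ℝ :=
  ‖∑ k ∈ Finset.range (n + 1), (Complex.I * (y : ℂ)) ^ k / (Nat.factorial k)‖ ^ 2 - 1

lemma alt_sum (m b : ℕ) (hm : 1 ≤ m) :
    ∑ j ∈ range (b+1), (-1:ℂ)^j * (m.choose j) = (-1)^b * ((m-1).choose b) := by
  induction b with
  | zero => simp
  | succ b ih =>
    rw [Finset.sum_range_succ, ih]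
    obtain ⟨m, rfl⟩ := Nat.exists_eq_add_of_le hm
    simp only [Nat.add_sub_cancel_left] at *
    rw [add_comm 1 m, Nat.choose_succ_succ m b]
    push_cast
    ring

lemma neg_pow_sub {j m : ℕ} (h : j ≤ m) : (-1:ℂ)^(m-j) = (-1)^m * (-1)^j := by
  have h2 : ((-1:ℂ)^j) * ((-1)^j) = 1 := by
    rw [← pow_add, ← two_mul]; exact Even.neg_one_pow ⟨j, by ring⟩
  calc (-1:ℂ)^(m-j) = (-1)^(m-j) * ((-1)^j * (-1)^j) := by rw [h2, mul_one]
    _ = (-1)^(m-j+j) * (-1)^j := by rw [pow_add]; ring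
    _ = (-1)^m * (-1)^j := by rw [Nat.sub_add_cancel h]

lemma inner_low (n m : ℕ) (hm1 : 1 ≤ m) (hmn : m ≤ n) :
    ∑ j ∈ Icc (m - n) (min m n), (-1:ℂ)^(m-j) * (m.choose j) = 0 := by
  rw [Nat.sub_eq_zero_of_le hmn, min_eq_left hmn]
  have : ∑ j ∈ Icc 0 m, (-1:ℂ)^(m-j) * (m.choose j)
      = (-1)^m * ∑ j ∈ range (m+1), (-1:ℂ)^j * (m.choose j) := by
    rw [Finset.mul_sum]
    rw [show Icc 0 m = range (m+1) by rw [Finset.range_eq_Ico]; rfl]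
    refine Finset.sum_congr rfl fun j hj => ?_
    rw [mem_range] at hj
    rw [neg_pow_sub (by omega)]; ring
  rw [this, alt_sum m m hm1, Nat.choose_eq_zero_of_lt (by omega)]
  simp

lemma inner_high (n m : ℕ) (hn : 1 ≤ n) (hm1 : n + 1 ≤ m) (hm2 : m ≤ 2*n) :
    ∑ j ∈ Icc (m - n) (min m n), (-1:ℂ)^(m-j) * (m.choose j)
      = (-1)^n * (1 + (-1)^m) * ((m-1).choose n) := by
  rw [min_eq_right (by omega)]
  have hsplit := Finset.sum_Ico_consecutive (fun j => (-1:ℂ)^j * (m.choose j))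
    (Nat.zero_le (m-n)) (show m - n ≤ n + 1 by omega)
  have h1 : ∑ j ∈ Icc (m-n) n, (-1:ℂ)^(m-j) * (m.choose j)
      = (-1)^m * ∑ j ∈ Ico (m-n) (n+1), (-1:ℂ)^j * (m.choose j) := by
    rw [Finset.mul_sum, show Icc (m-n) n = Ico (m-n) (n+1) from rfl]
    refine Finset.sum_congr rfl fun j hj => ?_
    rw [mem_Ico] at hj
    rw [neg_pow_sub (by omega)]; ring
  have h2 : ∑ j ∈ Ico (m-n) (n+1), (-1:ℂ)^j * (m.choose j)
      = ∑ j ∈ range (n+1), (-1:ℂ)^j * (m.choose j)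
        - ∑ j ∈ range (m-n), (-1:ℂ)^j * (m.choose j) := by
    simp only [Finset.range_eq_Ico]
    have := hsplit
    linear_combination this
  have h3 : m - n = (m - n - 1) + 1 := by omega
  rw [h1, h2, alt_sum m n (by omega), h3, alt_sum m (m-n-1) (by omega)]
  have h4 : (m-1).choose (m-n-1) = (m-1).choose n := by
    rw [show m - n - 1 = (m-1) - n by omega]
    exact Nat.choose_symm (by omega)
  rw [h4]
  have h5 : (-1:ℂ)^(m-n-1) = (-1)^m * (-1)^n * (-1) := by
    have := neg_pow_sub (show n+1 ≤ m by omega)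
    rw [show m - n - 1 = m - (n+1) by omega, this, pow_succ]
    ring
  rw [h5]
  have h6 : ((-1:ℂ)^m) * ((-1)^m) = 1 := by
    rw [← pow_add, ← two_mul]; exact Even.neg_one_pow ⟨m, by ring⟩
  calc (-1:ℂ)^m * ((-1)^n * ((m-1).choose n) - (-1)^m * (-1)^n * (-1) * ((m-1).choose n))
      = (-1)^m * (-1)^n * ((m-1).choose n) + ((-1)^m * (-1)^m) * (-1)^n * ((m-1).choose n) := by ring
    _ = (-1)^n * (1 + (-1)^m) * ((m-1).choose n) := by rw [h6]; ring

lemma fiber (n m : ℕ) (z : ℂ) :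
    ∑ p ∈ (range (n+1) ×ˢ range (n+1)).filter (fun p => p.1 + p.2 = m),
        z ^ p.1 / (p.1.factorial) * ((-z) ^ p.2 / (p.2.factorial))
      = (∑ j ∈ Icc (m - n) (min m n), (-1:ℂ)^(m-j) * (m.choose j)) * z ^ m / m.factorial := by
  rw [Finset.sum_mul, Finset.sum_div]
  refine Finset.sum_nbij' (fun p => p.1) (fun j => (j, m - j)) ?_ ?_ ?_ ?_ ?_
  · rintro ⟨a, b⟩ hp
    simp only [mem_filter, mem_product, mem_range] at hp
    obtain ⟨⟨ha, hb⟩, hab⟩ := hp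
    simp only [mem_Icc]
    omega
  · intro j hj
    simp only [mem_Icc] at hj
    simp only [mem_filter, mem_product, mem_range]
    omega
  · rintro ⟨a, b⟩ hp
    simp only [mem_filter, mem_product, mem_range] at hp
    simp only [Prod.mk.injEq]
    exact ⟨trivial, by omega⟩
  · intro j hj; rfl
  · rintro ⟨a, b⟩ hp
    simp only [mem_filter, mem_product, mem_range] at hp
    obtain ⟨⟨ha, hb⟩, hab⟩ := hp
    subst hab
    simp only [Nat.add_sub_cancel_left]
    have key : ((a+b).choose a : ℂ) * a.factorial * b.factorial = (a+b).factorial := by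
      have := Nat.choose_mul_factorial_mul_factorial (Nat.le_add_right a b)
      rw [Nat.add_sub_cancel_left] at this
      exact_mod_cast congrArg (Nat.cast : ℕ → ℂ) this
    have ha' : (a.factorial : ℂ) ≠ 0 := Nat.cast_ne_zero.2 a.factorial_ne_zero
    have hb' : (b.factorial : ℂ) ≠ 0 := Nat.cast_ne_zero.2 b.factorial_ne_zero
    have hab' : ((a+b).factorial : ℂ) ≠ 0 := Nat.cast_ne_zero.2 (a+b).factorial_ne_zero
    rw [neg_pow]
    field_simp
    rw [pow_add, ← key]
    ring

lemma core (n : ℕ) (hn : 1 ≤ n) (z : ℂ) :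
    (∑ k ∈ range (n+1), z^k / k.factorial) * (∑ k ∈ range (n+1), (-z)^k / k.factorial)
      = 1 + ∑ m ∈ Icc (n+1) (2*n),
          (((-1:ℂ))^n * (1 + (-1)^m) * ((m-1).choose n)) * z^m / m.factorial := by
  rw [Finset.sum_mul_sum, ← Finset.sum_product']
  rw [← Finset.sum_fiberwise_of_maps_to (g := fun p => p.1 + p.2) (t := range (2*n+1))
    (by rintro ⟨a,b⟩ hp; simp only [mem_product, mem_range] at hp ⊢; omega)]
  have heval : ∀ m ∈ range (2*n+1),
      ∑ p ∈ (range (n+1) ×ˢ range (n+1)).filter (fun p => p.1 + p.2 = m),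
        z ^ p.1 / (p.1.factorial) * ((-z) ^ p.2 / (p.2.factorial))
      = (∑ j ∈ Icc (m - n) (min m n), (-1:ℂ)^(m-j) * (m.choose j)) * z ^ m / m.factorial :=
    fun m _ => fiber n m z
  rw [Finset.sum_congr rfl heval]
  have hsplit := Finset.sum_Ico_consecutive
    (fun m => (∑ j ∈ Icc (m - n) (min m n), (-1:ℂ)^(m-j) * (m.choose j)) * z ^ m / m.factorial)
    (Nat.zero_le (n+1)) (show n+1 ≤ 2*n+1 by omega)
  rw [Finset.range_eq_Ico, ← hsplit]
  have hlow : ∑ m ∈ Ico 0 (n+1),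
      (∑ j ∈ Icc (m - n) (min m n), (-1:ℂ)^(m-j) * (m.choose j)) * z ^ m / m.factorial = 1 := by
    rw [← Finset.range_eq_Ico]
    rw [Finset.sum_eq_single_of_mem 0 (by simp)]
    · simp
    · intro m hm hm0
      rw [mem_range] at hm
      rw [inner_low n m (by omega) (by omega)]
      simp
  rw [hlow]
  congr 1
  rw [show Ico (n+1) (2*n+1) = Icc (n+1) (2*n) from rfl]
  refine Finset.sum_congr rfl fun m hm => ?_
  rw [mem_Icc] at hm
  rw [inner_high n m hn hm.1 hm.2]





lemma term_re (n m : ℕ) (y : ℝ) (hm : m % 2 = 0) :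
    ((((-1:ℂ))^n * (1 + (-1)^m) * ((m-1).choose n)) * (Complex.I * (y:ℂ))^m / m.factorial).re
      = (-1:ℝ)^n * 2 * ((m-1).choose n) * (-1)^(m/2) * y^m / m.factorial := by
  obtain ⟨q, rfl⟩ : ∃ q, m = 2*q := ⟨m/2, by omega⟩
  have h1 : (Complex.I * (y:ℂ))^(2*q) = ((((-1:ℝ))^q * y^(2*q) : ℝ) : ℂ) := by
    rw [pow_mul, show (Complex.I * (y:ℂ))^2 = -((y:ℂ)^2) by rw [mul_pow, Complex.I_sq]; ring,
      neg_pow, ← pow_mul]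
    push_cast
    ring
  have h2 : (1 : ℂ) + (-1)^(2*q) = 2 := by
    rw [pow_mul]; norm_num
  rw [h1, h2, show (2*q)/2 = q by omega]
  rw [show (((-1:ℂ))^n * 2 * (((2*q-1).choose n : ℕ) : ℂ)) * ((((-1:ℝ))^q * y^(2*q) : ℝ) : ℂ) / ((2*q).factorial : ℕ)
      = ((((-1:ℝ)^n * 2 * ((2*q-1).choose n) * (-1)^q * y^(2*q) / (2*q).factorial : ℝ)) : ℂ) by push_cast; ring]
  exact Complex.ofReal_re _

lemma E_sum (n : ℕ) (hn : 1 ≤ n) (y : ℝ) :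
    E n y = ∑ m ∈ (Icc (n+1) (2*n)).filter (fun m => m % 2 = 0),
      (-1:ℝ)^n * 2 * ((m-1).choose n) * (-1)^(m/2) * y^m / m.factorial := by
  have hconj : (starRingEnd ℂ) (∑ k ∈ range (n+1), (Complex.I * (y:ℂ))^k / (k.factorial : ℕ))
      = ∑ k ∈ range (n+1), (-(Complex.I * (y:ℂ)))^k / (k.factorial : ℕ) := by
    rw [map_sum]
    refine Finset.sum_congr rfl fun k _ => ?_
    rw [map_div₀, map_pow, map_mul, Complex.conj_I, Complex.conj_ofReal]
    norm_num
  have habs : E n y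
      = ((∑ k ∈ range (n+1), (Complex.I * (y:ℂ))^k / (k.factorial : ℕ)) *
          (∑ k ∈ range (n+1), (-(Complex.I * (y:ℂ)))^k / (k.factorial : ℕ))).re - 1 := by
    rw [E, ← hconj, Complex.mul_conj]
    simp [Complex.sq_norm]
  rw [habs, core n hn (Complex.I * (y:ℂ))]
  rw [Complex.add_re, Complex.one_re, add_sub_cancel_left, Complex.re_sum]
  rw [← Finset.sum_filter_add_sum_filter_not (Icc (n+1) (2*n)) (fun m => m % 2 = 0)]
  have hodd : ∑ m ∈ (Icc (n+1) (2*n)).filter (fun m => ¬ m % 2 = 0),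
      ((((-1:ℂ))^n * (1 + (-1)^m) * ((m-1).choose n)) * (Complex.I * (y:ℂ))^m / m.factorial).re = 0 := by
    refine Finset.sum_eq_zero fun m hm => ?_
    rw [mem_filter] at hm
    have : ((-1:ℂ))^m = -1 := Odd.neg_one_pow (Nat.odd_iff.2 (by omega))
    rw [this]
    norm_num
  rw [hodd, add_zero]
  refine Finset.sum_congr rfl fun m hm => ?_
  rw [mem_filter] at hm
  exact term_re n m y hm.2

lemma reindex_odd (n : ℕ) (hn : n % 2 = 1) (f : ℕ → ℝ) :
    ∑ m ∈ (Icc (n+1) (2*n)).filter (fun m => m % 2 = 0), f m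
      = ∑ k ∈ range ((n-1)/2 + 1), f (n+1+2*k) := by
  refine Finset.sum_nbij' (fun m => (m-(n+1))/2) (fun k => n+1+2*k) ?_ ?_ ?_ ?_ ?_
  · intro m hm
    simp only [mem_filter, mem_Icc] at hm
    rw [mem_range]; omega
  · intro k hk
    rw [mem_range] at hk
    simp only [mem_filter, mem_Icc]; omega
  · intro m hm
    simp only [mem_filter, mem_Icc] at hm
    omega
  · intro k hk; omega
  · intro m hm
    simp only [mem_filter, mem_Icc] at hm
    congr 1; omega

lemma reindex_even (n : ℕ) (hn : n % 2 = 0) (f : ℕ → ℝ) :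
    ∑ m ∈ (Icc (n+1) (2*n)).filter (fun m => m % 2 = 0), f m
      = ∑ k ∈ Icc 1 (n/2), f (n+2*k) := by
  refine Finset.sum_nbij' (fun m => (m-n)/2) (fun k => n+2*k) ?_ ?_ ?_ ?_ ?_
  · intro m hm
    simp only [mem_filter, mem_Icc] at hm
    rw [mem_Icc]; omega
  · intro k hk
    rw [mem_Icc] at hk
    simp only [mem_filter, mem_Icc]; omega
  · intro m hm
    simp only [mem_filter, mem_Icc] at hm
    omega
  · intro k hk; omega
  · intro m hm
    simp only [mem_filter, mem_Icc] at hm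
    congr 1; omega

lemma mag_odd (n k : ℕ) (y : ℝ) (hn : n % 2 = 1) :
    2 * (((n+2*k).choose n : ℕ) : ℝ) * y^(n+1+2*k) / ((n+1+2*k).factorial : ℕ)
      = (y^(n+1) / (n.factorial : ℕ)) * (y^(2*k) / (((2*k).factorial : ℕ) * ((k:ℝ) + ((n:ℝ)+1)/2))) := by
  have hch := Nat.choose_mul_factorial_mul_factorial (Nat.le_add_right n (2*k))
  rw [Nat.add_sub_cancel_left] at hch
  have h1 : ((n+1+2*k).factorial : ℝ)
      = (n+1+2*k) * (((n+2*k).choose n) * n.factorial * (2*k).factorial) := by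
    rw [show n+1+2*k = (n+2*k)+1 by omega, Nat.factorial_succ, ← hch]
    push_cast; ring
  have h2 : ((k:ℝ) + ((n:ℝ)+1)/2) = ((n:ℝ)+1+2*k) / 2 := by ring
  have hy : y^(n+1+2*k) = y^(n+1) * y^(2*k) := by rw [← pow_add]
  have hne1 : ((n.factorial : ℕ) : ℝ) ≠ 0 := Nat.cast_ne_zero.2 n.factorial_ne_zero
  have hne2 : (((2*k).factorial : ℕ) : ℝ) ≠ 0 := Nat.cast_ne_zero.2 (2*k).factorial_ne_zero
  have hne3 : ((n:ℝ)+1+2*k) ≠ 0 := by positivity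
  have hne4 : (((n+2*k).choose n : ℕ) : ℝ) ≠ 0 :=
    Nat.cast_ne_zero.2 (Nat.choose_pos (Nat.le_add_right n (2*k))).ne'
  rw [h1, h2, hy]
  push_cast
  field_simp

lemma mag_even (n k : ℕ) (y : ℝ) (hk : 1 ≤ k) :
    2 * (((n+2*k-1).choose n : ℕ) : ℝ) * y^(n+2*k) / ((n+2*k).factorial : ℕ)
      = (y^(n+1) / (n.factorial : ℕ)) * (y^(2*k-1) / (((2*k-1).factorial : ℕ) * ((k:ℝ) + (n:ℝ)/2))) := by
  have hle : n ≤ n + 2*k - 1 := by omega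
  have hch := Nat.choose_mul_factorial_mul_factorial hle
  rw [show n + 2*k - 1 - n = 2*k - 1 by omega] at hch
  have h1 : ((n+2*k).factorial : ℝ)
      = (n+2*k) * (((n+2*k-1).choose n) * n.factorial * (2*k-1).factorial) := by
    rw [show n+2*k = (n+2*k-1)+1 by omega, Nat.factorial_succ, ← hch]
    push_cast [show n+2*k-1+1 = n+2*k by omega]
    ring
  have h2 : ((k:ℝ) + (n:ℝ)/2) = ((n:ℝ)+2*k) / 2 := by ring
  have hy : y^(n+2*k) = y^(n+1) * y^(2*k-1) := by
    rw [← pow_add]; congr 1; omega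
  have hne1 : ((n.factorial : ℕ) : ℝ) ≠ 0 := Nat.cast_ne_zero.2 n.factorial_ne_zero
  have hne2 : (((2*k-1).factorial : ℕ) : ℝ) ≠ 0 := Nat.cast_ne_zero.2 (2*k-1).factorial_ne_zero
  have hne3 : ((n:ℝ)+2*k) ≠ 0 := by positivity
  have hne4 : (((n+2*k-1).choose n : ℕ) : ℝ) ≠ 0 :=
    Nat.cast_ne_zero.2 (Nat.choose_pos hle).ne'
  rw [h1, h2, hy]
  push_cast
  field_simp

lemma neg_one_pow_eq (a b : ℕ) (h : a % 2 = b % 2) : (-1:ℝ)^a = (-1)^b := by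
  rcases Nat.even_or_odd a with ha | ha
  · rw [Even.neg_one_pow ha, Even.neg_one_pow (Nat.even_iff.2 (by have := Nat.even_iff.1 ha; omega))]
  · rw [Odd.neg_one_pow ha, Odd.neg_one_pow (Nat.odd_iff.2 (by have := Nat.odd_iff.1 ha; omega))]

/-- Explicit formulas for `E n y` according to the residue of `n` modulo `4`. -/
theorem E_explicit_formulas (y : ℝ) (n : ℕ) (hn : 0 < n) :
    (n % 4 = 0 →
      E n y = -(y ^ (n + 1) / (Nat.factorial n)) *
        ∑ k ∈ Finset.Icc 1 (n / 2),
          (-1 : ℝ) ^ (k + 1) * y ^ (2 * k - 1) /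
            ((Nat.factorial (2 * k - 1)) * ((k : ℝ) + (n : ℝ) / 2))) ∧
    (n % 4 = 1 →
      E n y = (y ^ (n + 1) / (Nat.factorial n)) *
        ∑ k ∈ Finset.range ((n - 1) / 2 + 1),
          (-1 : ℝ) ^ k * y ^ (2 * k) /
            ((Nat.factorial (2 * k)) * ((k : ℝ) + ((n : ℝ) + 1) / 2))) ∧
    (n % 4 = 2 →
      E n y = (y ^ (n + 1) / (Nat.factorial n)) *
        ∑ k ∈ Finset.Icc 1 (n / 2),
          (-1 : ℝ) ^ (k + 1) * y ^ (2 * k - 1) /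
            ((Nat.factorial (2 * k - 1)) * ((k : ℝ) + (n : ℝ) / 2))) ∧
    (n % 4 = 3 →
      E n y = -(y ^ (n + 1) / (Nat.factorial n)) *
        ∑ k ∈ Finset.range ((n - 1) / 2 + 1),
          (-1 : ℝ) ^ k * y ^ (2 * k) /
            ((Nat.factorial (2 * k)) * ((k : ℝ) + ((n : ℝ) + 1) / 2))) := by
  refine ⟨?_, ?_, ?_, ?_⟩
  · -- n % 4 = 0
    intro h4
    have heven : n % 2 = 0 := by omega
    rw [E_sum n hn y, reindex_even n heven, Finset.mul_sum]
    refine Finset.sum_congr rfl fun k hk => ?_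
    rw [mem_Icc] at hk
    have s1 : (-1:ℝ)^n * (-1)^((n+2*k)/2) = (-1)^k := by
      rw [neg_one_pow_eq n 0 (by omega), neg_one_pow_eq ((n+2*k)/2) k (by omega)]
      ring
    calc (-1:ℝ)^n * 2 * ((n+2*k-1).choose n) * (-1)^((n+2*k)/2) * y^(n+2*k) / (n+2*k).factorial
        = ((-1:ℝ)^n * (-1)^((n+2*k)/2)) * (2 * ((n+2*k-1).choose n) * y^(n+2*k) / (n+2*k).factorial) := by
          ring
      _ = (-1)^k * ((y^(n+1) / (n.factorial : ℕ)) * (y^(2*k-1) / (((2*k-1).factorial : ℕ) * ((k:ℝ) + (n:ℝ)/2)))) := by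
          rw [s1, mag_even n k y hk.1]
      _ = -(y ^ (n + 1) / (Nat.factorial n)) * ((-1 : ℝ) ^ (k + 1) * y ^ (2 * k - 1) /
            ((Nat.factorial (2 * k - 1)) * ((k : ℝ) + (n : ℝ) / 2))) := by
          rw [pow_succ]; ring
  · -- n % 4 = 1
    intro h4
    have hodd : n % 2 = 1 := by omega
    rw [E_sum n hn y, reindex_odd n hodd, Finset.mul_sum]
    refine Finset.sum_congr rfl fun k hk => ?_
    have s1 : (-1:ℝ)^n * (-1)^((n+1+2*k)/2) = (-1)^k := by
      rw [neg_one_pow_eq n 1 (by omega), neg_one_pow_eq ((n+1+2*k)/2) (k+1) (by omega), pow_succ]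
      ring
    rw [show n+1+2*k-1 = n+2*k from by omega]
    calc (-1:ℝ)^n * 2 * ((n+2*k).choose n) * (-1)^((n+1+2*k)/2) * y^(n+1+2*k) / (n+1+2*k).factorial
        = ((-1:ℝ)^n * (-1)^((n+1+2*k)/2)) * (2 * ((n+2*k).choose n) * y^(n+1+2*k) / (n+1+2*k).factorial) := by
          ring
      _ = (-1)^k * ((y^(n+1) / (n.factorial : ℕ)) * (y^(2*k) / (((2*k).factorial : ℕ) * ((k:ℝ) + ((n:ℝ)+1)/2)))) := by
          rw [s1, mag_odd n k y hodd]
      _ = (y ^ (n + 1) / (Nat.factorial n)) * ((-1 : ℝ) ^ k * y ^ (2 * k) /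
            ((Nat.factorial (2 * k)) * ((k : ℝ) + ((n : ℝ) + 1) / 2))) := by
          ring
  · -- n % 4 = 2
    intro h4
    have heven : n % 2 = 0 := by omega
    rw [E_sum n hn y, reindex_even n heven, Finset.mul_sum]
    refine Finset.sum_congr rfl fun k hk => ?_
    rw [mem_Icc] at hk
    have s1 : (-1:ℝ)^n * (-1)^((n+2*k)/2) = (-1)^(k+1) := by
      rw [neg_one_pow_eq n 0 (by omega), neg_one_pow_eq ((n+2*k)/2) (k+1) (by omega)]
      ring
    calc (-1:ℝ)^n * 2 * ((n+2*k-1).choose n) * (-1)^((n+2*k)/2) * y^(n+2*k) / (n+2*k).factorial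
        = ((-1:ℝ)^n * (-1)^((n+2*k)/2)) * (2 * ((n+2*k-1).choose n) * y^(n+2*k) / (n+2*k).factorial) := by
          ring
      _ = (-1)^(k+1) * ((y^(n+1) / (n.factorial : ℕ)) * (y^(2*k-1) / (((2*k-1).factorial : ℕ) * ((k:ℝ) + (n:ℝ)/2)))) := by
          rw [s1, mag_even n k y hk.1]
      _ = (y ^ (n + 1) / (Nat.factorial n)) * ((-1 : ℝ) ^ (k + 1) * y ^ (2 * k - 1) /
            ((Nat.factorial (2 * k - 1)) * ((k : ℝ) + (n : ℝ) / 2))) := by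
          ring
  · -- n % 4 = 3
    intro h4
    have hodd : n % 2 = 1 := by omega
    rw [E_sum n hn y, reindex_odd n hodd, Finset.mul_sum]
    refine Finset.sum_congr rfl fun k hk => ?_
    have s1 : (-1:ℝ)^n * (-1)^((n+1+2*k)/2) = (-1)^(k+1) := by
      rw [neg_one_pow_eq n 1 (by omega), neg_one_pow_eq ((n+1+2*k)/2) k (by omega), pow_succ]
      ring
    rw [show n+1+2*k-1 = n+2*k from by omega]
    calc (-1:ℝ)^n * 2 * ((n+2*k).choose n) * (-1)^((n+1+2*k)/2) * y^(n+1+2*k) / (n+1+2*k).factorial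
        = ((-1:ℝ)^n * (-1)^((n+1+2*k)/2)) * (2 * ((n+2*k).choose n) * y^(n+1+2*k) / (n+1+2*k).factorial) := by
          ring
      _ = (-1)^(k+1) * ((y^(n+1) / (n.factorial : ℕ)) * (y^(2*k) / (((2*k).factorial : ℕ) * ((k:ℝ) + ((n:ℝ)+1)/2)))) := by
          rw [s1, mag_odd n k y hodd]
      _ = -(y ^ (n + 1) / (Nat.factorial n)) * ((-1 : ℝ) ^ k * y ^ (2 * k) /
            ((Nat.factorial (2 * k)) * ((k : ℝ) + ((n : ℝ) + 1) / 2))) := by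
          rw [pow_succ]; ring
end

section
/- For every positive integer n with n ≡ 1 (mod 4) or n ≡ 2 (mod 4), there exists ρ_n > 0 such that V⁺_n ∩ [0, ρ_n] = {0}; that is, 0 ∈ V⁺_n but no y ∈ (0, ρ_n] belongs to V⁺_n. -/
/-- The upper vertical slice of the unscaled stability region along the imaginary axis:
`V⁺_n = {y ∈ ℝ : y ≥ 0 and |∑_{k=0}^n (i y)^k / k!| ≤ 1}`. -/
noncomputable def Vplus (n : ℕ) : Set ℝ :=
  {y : ℝ | 0 ≤ y ∧
    ‖∑ k ∈ Finset.range (n + 1), (Complex.I * (y : ℂ)) ^ k / (Nat.factorial k)‖ ≤ 1}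

/-- Partial sums of the exponential series at `i y`. -/
noncomputable def pSum (n : ℕ) (y : ℝ) : ℂ :=
  ∑ k ∈ Finset.range n, (Complex.I * (y : ℂ)) ^ k / (Nat.factorial k)

lemma hasDerivAt_pSum (n : ℕ) (y : ℝ) :
    HasDerivAt (fun y : ℝ => pSum (n + 1) y) (Complex.I * pSum n y) y := by
  have h : HasDerivAt
      (fun z : ℂ => ∑ k ∈ Finset.range (n + 1), (Complex.I * z) ^ k / (Nat.factorial k))
      (Complex.I * pSum n y) (y : ℂ) := by
    have h1 : ∀ k ∈ Finset.range (n + 1),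
        HasDerivAt (fun z : ℂ => (Complex.I * z) ^ k / (Nat.factorial k))
          ((k * (Complex.I * (y : ℂ)) ^ (k - 1) * Complex.I) / (Nat.factorial k)) (y : ℂ) :=
      fun k _ => by
        simpa using (((hasDerivAt_id (y : ℂ)).const_mul Complex.I).pow k).div_const
          ((Nat.factorial k : ℂ))
    have h2 := HasDerivAt.sum h1
    convert h2 using 1
    · rfl
    · rfl
    · funext z
      rw [Finset.sum_apply]
    rw [Finset.sum_range_succ']
    simp only [Nat.cast_zero, zero_mul, pow_zero, Nat.factorial_zero, Nat.cast_one, zero_div,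
      add_zero, Nat.succ_sub_one]
    rw [pSum, Finset.mul_sum]
    refine Finset.sum_congr rfl fun i _ => ?_
    have hfac : ((Nat.factorial (i + 1) : ℂ)) = (i + 1 : ℂ) * (Nat.factorial i : ℂ) := by
      push_cast [Nat.factorial_succ]; ring
    rw [hfac]
    have h0 : (Nat.factorial i : ℂ) ≠ 0 := by
      exact_mod_cast Nat.cast_ne_zero.mpr (Nat.factorial_ne_zero i)
    have h1' : (i + 1 : ℂ) ≠ 0 := Nat.cast_add_one_ne_zero i
    push_cast
    field_simp
  exact h.comp_ofReal

lemma hasDerivAt_normSq_pSum (n : ℕ) (y : ℝ) :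
    HasDerivAt (fun y : ℝ => Complex.normSq (pSum (n + 1) y))
      (2 * ((starRingEnd ℂ) (pSum n y) * pSum (n + 1) y).im) y := by
  have hS := hasDerivAt_pSum n y
  have hre : HasDerivAt (fun y : ℝ => (pSum (n + 1) y).re) ((Complex.I * pSum n y).re) y := by
    simpa [Function.comp_def] using Complex.reCLM.hasFDerivAt.comp_hasDerivAt y hS
  have him : HasDerivAt (fun y : ℝ => (pSum (n + 1) y).im) ((Complex.I * pSum n y).im) y := by
    simpa [Function.comp_def] using Complex.imCLM.hasFDerivAt.comp_hasDerivAt y hS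
  have h := (hre.mul hre).add (him.mul him)
  convert h using 1
  · rfl
  · rfl
  · funext z
    exact Complex.normSq_apply _
  simp only [Complex.mul_im, Complex.mul_re, Complex.I_re, Complex.I_im, Complex.conj_re,
    Complex.conj_im]
  ring

lemma geom_half_le (m : ℕ) : ∑ i ∈ Finset.range m, ((1 : ℝ) / 2) ^ i ≤ 2 := by
  induction m with
  | zero => simp
  | succ k ih =>
    have h := geom_sum_eq (by norm_num : ((1 : ℝ) / 2) ≠ 1) (k + 1)
    rw [h]
    have : (0 : ℝ) < (1 / 2 : ℝ) ^ (k + 1) := by positivity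
    rw [div_le_iff_of_neg (by norm_num : ((1:ℝ)/2 - 1) < 0)]
    nlinarith

lemma pSum_sub_one_abs_le (n : ℕ) (y : ℝ) (hy0 : 0 ≤ y) (hy : y ≤ 1 / 2) :
    ‖pSum (n + 1) y - 1‖ ≤ 2 * y := by
  have hsplit : pSum (n + 1) y - 1 =
      ∑ i ∈ Finset.range n, (Complex.I * (y : ℂ)) ^ (i + 1) / (Nat.factorial (i + 1)) := by
    rw [pSum, Finset.sum_range_succ']
    simp
  rw [hsplit]
  calc ‖∑ i ∈ Finset.range n, (Complex.I * (y:ℂ)) ^ (i+1) / (Nat.factorial (i+1))‖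
      ≤ ∑ i ∈ Finset.range n,
          ‖(Complex.I * (y:ℂ)) ^ (i+1) / (Nat.factorial (i+1))‖ :=
        norm_sum_le _ _
    _ ≤ ∑ i ∈ Finset.range n, y * (1 / 2) ^ i := by
        refine Finset.sum_le_sum fun i _ => ?_
        rw [norm_div, norm_pow]
        have habs : ‖Complex.I * (y : ℂ)‖ = y := by
          simp [Complex.norm_real, abs_of_nonneg hy0]
        rw [habs]
        have hfac1 : (1 : ℝ) ≤ ‖(Nat.factorial (i+1) : ℂ)‖ := by
          rw [Complex.norm_natCast]
          exact_mod_cast Nat.one_le_iff_ne_zero.mpr (Nat.factorial_ne_zero _)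
        have hpow : y ^ (i + 1) ≤ y * (1 / 2) ^ i := by
          rw [pow_succ']
          exact mul_le_mul_of_nonneg_left (pow_le_pow_left₀ hy0 hy i) hy0
        calc y ^ (i+1) / ‖(Nat.factorial (i+1) : ℂ)‖
            ≤ y ^ (i+1) / 1 := by
              apply div_le_div_of_nonneg_left (by positivity) (by norm_num) hfac1
          _ = y ^ (i+1) := by ring
          _ ≤ y * (1/2) ^ i := hpow
    _ = y * ∑ i ∈ Finset.range n, ((1:ℝ)/2) ^ i := by rw [Finset.mul_sum]
    _ ≤ y * 2 := mul_le_mul_of_nonneg_left (geom_half_le n) hy0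
    _ = 2 * y := by ring

lemma pSum_re_ge (n : ℕ) (y : ℝ) (hy0 : 0 ≤ y) (hy : y ≤ 1 / 2) :
    1 - 2 * y ≤ (pSum (n + 1) y).re := by
  have h := pSum_sub_one_abs_le n y hy0 hy
  have h2 : |(pSum (n + 1) y - 1).re| ≤ 2 * y :=
    le_trans (Complex.abs_re_le_norm _) h
  have h3 : (pSum (n + 1) y - 1).re = (pSum (n + 1) y).re - 1 := by simp
  rw [h3] at h2
  have := abs_le.mp h2
  linarith [this.1]

lemma pSum_sub_abs_le (n : ℕ) (y : ℝ) (hy0 : 0 ≤ y) (hy : y ≤ 1 / 2) :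
    ‖pSum (n + 2) y - 1 - Complex.I * (y : ℂ)‖ ≤ 2 * y ^ 2 := by
  have hsplit : pSum (n + 2) y - 1 - Complex.I * (y : ℂ) =
      ∑ i ∈ Finset.range n, (Complex.I * (y : ℂ)) ^ (i + 2) / (Nat.factorial (i + 2)) := by
    rw [pSum, Finset.sum_range_succ', Finset.sum_range_succ']
    simp
  rw [hsplit]
  calc ‖∑ i ∈ Finset.range n, (Complex.I * (y:ℂ)) ^ (i+2) / (Nat.factorial (i+2))‖
      ≤ ∑ i ∈ Finset.range n,
          ‖(Complex.I * (y:ℂ)) ^ (i+2) / (Nat.factorial (i+2))‖ :=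
        norm_sum_le _ _
    _ ≤ ∑ i ∈ Finset.range n, y ^ 2 * (1 / 2) ^ i := by
        refine Finset.sum_le_sum fun i _ => ?_
        rw [norm_div, norm_pow]
        have habs : ‖Complex.I * (y : ℂ)‖ = y := by
          simp [Complex.norm_real, abs_of_nonneg hy0]
        rw [habs]
        have hfac1 : (1 : ℝ) ≤ ‖(Nat.factorial (i+2) : ℂ)‖ := by
          rw [Complex.norm_natCast]
          exact_mod_cast Nat.one_le_iff_ne_zero.mpr (Nat.factorial_ne_zero _)
        have hpow : y ^ (i + 2) ≤ y ^ 2 * (1 / 2) ^ i := by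
          have : y ^ (i + 2) = y ^ 2 * y ^ i := by ring
          rw [this]
          exact mul_le_mul_of_nonneg_left (pow_le_pow_left₀ hy0 hy i) (by positivity)
        calc y ^ (i+2) / ‖(Nat.factorial (i+2) : ℂ)‖
            ≤ y ^ (i+2) / 1 := by
              apply div_le_div_of_nonneg_left (by positivity) (by norm_num) hfac1
          _ = y ^ (i+2) := by ring
          _ ≤ y ^ 2 * (1/2) ^ i := hpow
    _ = y ^ 2 * ∑ i ∈ Finset.range n, ((1:ℝ)/2) ^ i := by rw [Finset.mul_sum]
    _ ≤ y ^ 2 * 2 := mul_le_mul_of_nonneg_left (geom_half_le n) (by positivity)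
    _ = 2 * y ^ 2 := by ring

lemma pSum_im_ge (n : ℕ) (y : ℝ) (hy0 : 0 ≤ y) (hy : y ≤ 1 / 2) :
    y - 2 * y ^ 2 ≤ (pSum (n + 2) y).im := by
  have h := pSum_sub_abs_le n y hy0 hy
  have h2 : |(pSum (n + 2) y - 1 - Complex.I * (y:ℂ)).im| ≤ 2 * y ^ 2 :=
    le_trans (Complex.abs_im_le_norm _) h
  have h3 : (pSum (n + 2) y - 1 - Complex.I * (y:ℂ)).im = (pSum (n + 2) y).im - y := by simp
  rw [h3] at h2
  have := abs_le.mp h2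
  linarith [this.1]

lemma pSum_zero (n : ℕ) : pSum (n + 1) 0 = 1 := by
  rw [pSum]
  rw [Finset.sum_eq_single 0]
  · simp
  · intro k _ hk
    simp [zero_pow hk]
  · intro h
    exact absurd (Finset.mem_range.mpr (Nat.succ_pos n)) h

/-- For `n ≡ 1` or `n ≡ 2 (mod 4)`, there is `ρ_n > 0` with `V⁺_n ∩ [0, ρ_n] = {0}`. -/
theorem Vplus_inter_Icc_eq_singleton (n : ℕ) (hn : 0 < n) (hmod : n % 4 = 1 ∨ n % 4 = 2) :
    ∃ ρ : ℝ, 0 < ρ ∧ Vplus n ∩ Set.Icc 0 ρ = {0} := by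
  refine ⟨1/4, by norm_num, ?_⟩
  set f : ℝ → ℝ := fun y => Complex.normSq (pSum (n + 1) y) with hf
  -- the derivative is positive on (0, 1/4)
  have hderiv_pos : ∀ x ∈ Set.Ioo (0:ℝ) (1/4), 0 < deriv f x := by
    intro x hx
    obtain ⟨hx0, hx4⟩ := hx
    have hx2 : x ≤ 1/2 := by linarith
    have hD := hasDerivAt_normSq_pSum n x
    rw [hD.deriv]
    have hsplit : pSum (n + 1) x = pSum n x +
        (Complex.I * (x:ℂ)) ^ n / (Nat.factorial n) := by
      rw [pSum, pSum, Finset.sum_range_succ]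
    have him : ((starRingEnd ℂ) (pSum n x) * pSum (n + 1) x).im =
        ((starRingEnd ℂ) (pSum n x) * ((Complex.I * (x:ℂ)) ^ n / (Nat.factorial n))).im := by
      rw [hsplit, mul_add, Complex.add_im]
      have : ((starRingEnd ℂ) (pSum n x) * pSum n x).im = 0 := by
        rw [mul_comm, Complex.mul_conj]
        simp
      rw [this, zero_add]
    rw [him]
    have hfacpos : (0:ℝ) < Nat.factorial n := by exact_mod_cast Nat.factorial_pos n
    rcases hmod with h1 | h2
    · -- n % 4 = 1 : I^n = I
      have hIn : Complex.I ^ n = Complex.I := by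
        conv_lhs => rw [← Nat.div_add_mod n 4, h1]
        rw [pow_add, pow_mul, Complex.I_pow_four, one_pow, pow_one, one_mul]
      set r : ℝ := x ^ n / Nat.factorial n with hr
      have hw : (Complex.I * (x:ℂ)) ^ n / (Nat.factorial n) =
          Complex.I * (r : ℂ) := by
        rw [hr, mul_pow, hIn]
        push_cast
        ring
      rw [hw]
      have him2 : ((starRingEnd ℂ) (pSum n x) * (Complex.I * (r : ℂ))).im =
          (pSum n x).re * r := by
        simp [Complex.mul_im, Complex.mul_re]
      rw [him2]
      obtain ⟨m, rfl⟩ : ∃ m, n = m + 1 := ⟨n - 1, (Nat.succ_pred_eq_of_pos hn).symm⟩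
      have hre := pSum_re_ge m x (le_of_lt hx0) hx2
      have hrepos : 0 < (pSum (m + 1) x).re := by linarith
      have : 0 < x ^ (m + 1) / Nat.factorial (m + 1) := by positivity
      positivity
    · -- n % 4 = 2 : I^n = -1
      have hIn : Complex.I ^ n = -1 := by
        conv_lhs => rw [← Nat.div_add_mod n 4, h2]
        rw [pow_add, pow_mul, Complex.I_pow_four, one_pow, one_mul, Complex.I_sq]
      set r : ℝ := x ^ n / Nat.factorial n with hr
      have hw : (Complex.I * (x:ℂ)) ^ n / (Nat.factorial n) =
          (((-r) : ℝ) : ℂ) := by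
        rw [hr, mul_pow, hIn]
        push_cast
        ring
      rw [hw]
      have him2 : ((starRingEnd ℂ) (pSum n x) * (((-r) : ℝ) : ℂ)).im =
          (pSum n x).im * r := by
        simp [Complex.mul_im]
      rw [him2]
      obtain ⟨m, rfl⟩ : ∃ m, n = m + 2 := by
        refine ⟨n - 2, ?_⟩
        have : 2 ≤ n := by omega
        omega
      have him3 := pSum_im_ge m x (le_of_lt hx0) hx2
      have himpos : 0 < (pSum (m + 2) x).im := by nlinarith
      have : 0 < x ^ (m + 2) / Nat.factorial (m + 2) := by positivity
      positivity
  -- f is continuous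
  have hdiff : Differentiable ℝ f := fun y => (hasDerivAt_normSq_pSum n y).differentiableAt
  have hmono : StrictMonoOn f (Set.Icc 0 (1/4)) := by
    apply strictMonoOn_of_deriv_pos (convex_Icc 0 (1/4)) hdiff.continuous.continuousOn
    intro x hx
    rw [interior_Icc] at hx
    exact hderiv_pos x hx
  have hf0 : f 0 = 1 := by
    simp [hf, pSum_zero n]
  ext y
  simp only [Set.mem_inter_iff, Set.mem_Icc, Set.mem_singleton_iff]
  constructor
  · rintro ⟨⟨hy0, habs⟩, _, hy4⟩
    by_contra hne
    have hy : 0 < y := lt_of_le_of_ne hy0 (Ne.symm hne)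
    have hlt : f 0 < f y := hmono ⟨le_refl 0, by norm_num⟩ ⟨hy0, hy4⟩ hy
    rw [hf0] at hlt
    have hsq : ‖pSum (n + 1) y‖ ^ 2 = f y := Complex.sq_norm _
    have habs' : ‖pSum (n + 1) y‖ ≤ 1 := habs
    nlinarith [norm_nonneg (pSum (n + 1) y)]
  · rintro rfl
    refine ⟨⟨le_refl 0, ?_⟩, le_refl 0, by norm_num⟩
    show ‖pSum (n + 1) 0‖ ≤ 1
    rw [pSum_zero n]
    simp
end

section
/- For every positive integer n with n ≡ 0 (mod 4) or n ≡ 3 (mod 4), there exists ρ_n > 0 such that the interval [0, ρ_n] is contained in V⁺_n; that is, every y ∈ [0, ρ_n] satisfies |∑_{k=0}^n (iy)^k/k!| ≤ 1. -/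
open Complex Finset

private lemma fact_ge_pow (m : ℕ) (hm : 1 ≤ m) :
    ∀ k, m ≤ k → (m.factorial : ℝ) * 2 ^ (k - m) ≤ (k.factorial : ℝ) := by
  intro k hk
  induction k, hk using Nat.le_induction with
  | base => simp
  | succ k hk ih =>
    have hfk : (0:ℝ) < (k.factorial : ℝ) := by
      exact_mod_cast Nat.factorial_pos k
    have h2 : (2:ℝ) ≤ (k:ℝ) + 1 := by
      have : 1 ≤ k := le_trans hm hk
      have : (1:ℝ) ≤ (k:ℝ) := by exact_mod_cast this
      linarith
    have hstep : (m.factorial : ℝ) * 2 ^ (k + 1 - m) = (m.factorial : ℝ) * 2 ^ (k - m) * 2 := by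
      rw [mul_assoc, ← pow_succ]
      congr 2
      omega
    rw [hstep, Nat.factorial_succ]
    push_cast
    nlinarith

private lemma tail_bound (m n : ℕ) (hm : 1 ≤ m) (y : ℝ) (hy0 : 0 ≤ y) (hy1 : y ≤ 1) :
    ‖∑ k ∈ Finset.Ico m n, (Complex.I * (y:ℂ)) ^ k / (Nat.factorial k)‖ ≤
      2 * y ^ m / (Nat.factorial m) := by
  have hfm : (0:ℝ) < (m.factorial : ℝ) := by exact_mod_cast Nat.factorial_pos m
  calc ‖∑ k ∈ Finset.Ico m n, (Complex.I * (y:ℂ)) ^ k / (Nat.factorial k)‖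
      ≤ ∑ k ∈ Finset.Ico m n, ‖(Complex.I * (y:ℂ)) ^ k / (Nat.factorial k)‖ :=
        norm_sum_le _ _
    _ ≤ ∑ k ∈ Finset.Ico m n, (y ^ m / m.factorial) * (1/2) ^ (k - m) := by
        apply Finset.sum_le_sum
        intro k hk
        have hkm : m ≤ k := (Finset.mem_Ico.mp hk).1
        have hfk : (0:ℝ) < (k.factorial : ℝ) := by exact_mod_cast Nat.factorial_pos k
        have habs : ‖(Complex.I * (y:ℂ)) ^ k / (Nat.factorial k)‖
            = y ^ k / k.factorial := by
          rw [norm_div, norm_pow, norm_mul, Complex.norm_I, Complex.norm_real,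
            Real.norm_of_nonneg hy0, one_mul, Complex.norm_natCast]
        rw [habs]
        have h1 : y ^ k ≤ y ^ m := pow_le_pow_of_le_one hy0 hy1 hkm
        have h2 : (m.factorial : ℝ) * 2 ^ (k - m) ≤ (k.factorial : ℝ) :=
          fact_ge_pow m hm k hkm
        have hpos : (0:ℝ) < (m.factorial : ℝ) * 2 ^ (k - m) := by positivity
        calc y ^ k / (k.factorial : ℝ) ≤ y ^ m / ((m.factorial : ℝ) * 2 ^ (k - m)) :=
              div_le_div₀ (pow_nonneg hy0 m) h1 hpos h2
          _ = (y ^ m / m.factorial) * (1/2) ^ (k - m) := by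
              rw [one_div, inv_pow, div_mul_eq_div_div_swap, div_div]
              ring_nf
    _ = (y ^ m / m.factorial) * ∑ k ∈ Finset.Ico m n, ((1:ℝ)/2) ^ (k - m) := by
        rw [Finset.mul_sum]
    _ ≤ (y ^ m / m.factorial) * 2 := by
        have hg : (∑ k ∈ Finset.Ico m n, ((1:ℝ)/2) ^ (k - m)) ≤ 2 := by
          rw [Finset.sum_Ico_eq_sum_range]
          simp only [Nat.add_sub_cancel_left]
          exact sum_geometric_two_le _
        exact mul_le_mul_of_nonneg_left hg (by positivity)
    _ = 2 * y ^ m / m.factorial := by ring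

private lemma S_hasDerivAt (n : ℕ) (y : ℝ) :
    HasDerivAt (fun t : ℝ => ∑ k ∈ Finset.range (n+1), (Complex.I * (t:ℂ)) ^ k / (Nat.factorial k))
      (Complex.I * ∑ k ∈ Finset.range n, (Complex.I * (y:ℂ)) ^ k / (Nat.factorial k)) y := by
  have base : HasDerivAt (fun z : ℂ => Complex.I * z) Complex.I ((y:ℝ):ℂ) := by
    simpa using (hasDerivAt_id ((y:ℝ):ℂ)).const_mul Complex.I
  have hterm : ∀ k ∈ Finset.range (n+1), HasDerivAt
      (fun t : ℝ => (Complex.I * (t:ℂ)) ^ k / (Nat.factorial k))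
      (((k : ℂ) * (Complex.I * (y:ℂ)) ^ (k-1) * Complex.I) / (Nat.factorial k)) y :=
    fun k _ => (((base.pow k).div_const _).comp_ofReal)
  have hsum := HasDerivAt.fun_sum hterm
  refine hsum.congr_deriv (Eq.symm ?_)
  rw [Finset.sum_range_succ']
  simp only [Nat.cast_zero, zero_mul, Nat.factorial_zero, Nat.cast_one, zero_div, add_zero]
  rw [Finset.mul_sum]
  apply Finset.sum_congr rfl
  intro i _
  have h1 : ((i+1 : ℕ).factorial : ℂ) = ((i:ℂ)+1) * (i.factorial : ℂ) := by
    rw [Nat.factorial_succ]; push_cast; ring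
  have h2 : ((i:ℂ)+1) ≠ 0 := by
    exact_mod_cast (Nat.cast_ne_zero (R := ℂ)).mpr (Nat.succ_ne_zero i)
  have h3 : ((i.factorial : ℂ)) ≠ 0 := by
    exact_mod_cast (Nat.cast_ne_zero (R := ℂ)).mpr (Nat.factorial_ne_zero i)
  rw [h1]
  push_cast
  field_simp

/-- For `n ≡ 0` or `n ≡ 3 (mod 4)`, there is `ρ_n > 0` with `[0, ρ_n] ⊆ V⁺_n`. -/
theorem Icc_subset_Vplus (n : ℕ) (hn : 0 < n) (hmod : n % 4 = 0 ∨ n % 4 = 3) :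
    ∃ ρ : ℝ, 0 < ρ ∧ Set.Icc (0 : ℝ) ρ ⊆ Vplus n := by
  set S : ℝ → ℂ := fun t => ∑ k ∈ Finset.range (n+1), (Complex.I * (t:ℂ)) ^ k / (Nat.factorial k)
    with hSdef
  set T : ℝ → ℂ := fun t => ∑ k ∈ Finset.range n, (Complex.I * (t:ℂ)) ^ k / (Nat.factorial k)
    with hTdef
  -- derivative of normSq ∘ S
  have hS' : ∀ t : ℝ, HasDerivAt S (Complex.I * T t) t := fun t => S_hasDerivAt n t
  have hf : ∀ t : ℝ, HasDerivAt (fun t => Complex.normSq (S t))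
      (2 * ((S t).re * (Complex.I * T t).re + (S t).im * (Complex.I * T t).im)) t := by
    intro t
    have hre : HasDerivAt (fun t : ℝ => (S t).re) (Complex.I * T t).re t := by
      exact (Complex.reCLM.hasFDerivAt.comp_hasDerivAt t (hS' t))
    have him : HasDerivAt (fun t : ℝ => (S t).im) (Complex.I * T t).im t := by
      exact (Complex.imCLM.hasFDerivAt.comp_hasDerivAt t (hS' t))
    have h := (hre.mul hre).add (him.mul him)
    have heq : (fun t : ℝ => Complex.normSq (S t))
        = fun t : ℝ => (S t).re * (S t).re + (S t).im * (S t).im := by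
      funext t; rw [Complex.normSq_apply]
    rw [heq]
    refine h.congr_deriv ?_
    ring
  -- sign of the derivative on (0, 1/2)
  have key : ∀ t ∈ Set.Ioo (0:ℝ) (1/2),
      2 * ((S t).re * (Complex.I * T t).re + (S t).im * (Complex.I * T t).im) ≤ 0 := by
    intro t ht
    obtain ⟨ht0, ht2⟩ := ht
    have ht1 : t ≤ 1 := by linarith
    have hsplit : S t = T t + (Complex.I * (t:ℂ)) ^ n / (Nat.factorial n) := by
      rw [hSdef, hTdef]; exact Finset.sum_range_succ _ n
    have hexpr : (S t).re * (Complex.I * T t).re + (S t).im * (Complex.I * T t).im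
        = ((Complex.I * (t:ℂ))^n / (Nat.factorial n)).re * (-(T t).im)
          + ((Complex.I * (t:ℂ))^n / (Nat.factorial n)).im * (T t).re := by
      rw [hsplit]
      simp only [Complex.add_re, Complex.add_im, Complex.mul_re, Complex.mul_im,
        Complex.I_re, Complex.I_im]
      ring
    rw [hexpr]
    have hIn : Complex.I ^ n = Complex.I ^ (n % 4) := by
      conv_lhs => rw [← Nat.div_add_mod n 4]
      have h4 : Complex.I ^ 4 = 1 := by
        rw [show (4:ℕ) = 2*2 from rfl, pow_mul, Complex.I_sq]; norm_num
      rw [pow_add, pow_mul, h4, one_pow, one_mul]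
    have hfn : (0:ℝ) < (n.factorial : ℝ) := by exact_mod_cast Nat.factorial_pos n
    rcases hmod with hm0 | hm3
    · -- n ≡ 0 (mod 4) : (I t)^n / n! is the real number t^n/n!
      have hw : (Complex.I * (t:ℂ))^n / (Nat.factorial n)
          = ((t^n / n.factorial : ℝ) : ℂ) := by
        rw [mul_pow, hIn, hm0, pow_zero, one_mul]
        push_cast
        ring
      rw [hw]
      simp only [Complex.ofReal_re, Complex.ofReal_im, zero_mul, add_zero]
      -- need Im (T t) ≥ 0
      have hn2 : 2 ≤ n := by omega
      have hTsplit : T t = (1 + Complex.I * (t:ℂ))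
          + ∑ k ∈ Finset.Ico 2 n, (Complex.I * (t:ℂ)) ^ k / (Nat.factorial k) := by
        rw [hTdef]
        simp only []
        rw [Finset.range_eq_Ico, ← Finset.sum_Ico_consecutive _ (Nat.zero_le 2) hn2]
        congr 1
        rw [← Finset.range_eq_Ico]
        simp [Finset.sum_range_succ]
      have hR := tail_bound 2 n (by norm_num) t ht0.le ht1
      set R : ℂ := ∑ k ∈ Finset.Ico 2 n, (Complex.I * (t:ℂ)) ^ k / (Nat.factorial k) with hRdef
      have hRim : |R.im| ≤ t ^ 2 := by
        calc |R.im| ≤ ‖R‖ := Complex.abs_im_le_norm R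
          _ ≤ 2 * t ^ 2 / (Nat.factorial 2) := hR
          _ = t ^ 2 := by norm_num [Nat.factorial]
      have hTim : 0 ≤ (T t).im := by
        rw [hTsplit]
        simp only [Complex.add_im, Complex.one_im, Complex.mul_im, Complex.I_re, Complex.I_im,
          Complex.ofReal_re, Complex.ofReal_im]
        have h1 : -(t^2) ≤ R.im := (abs_le.mp hRim).1
        nlinarith
      have hpos : 0 ≤ t ^ n / (n.factorial : ℝ) := by positivity
      nlinarith
    · -- n ≡ 3 (mod 4) : (I t)^n / n! = -I * (t^n/n!)
      have hw : (Complex.I * (t:ℂ))^n / (Nat.factorial n)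
          = -Complex.I * ((t^n / n.factorial : ℝ) : ℂ) := by
        rw [mul_pow, hIn, hm3]
        have : Complex.I ^ 3 = -Complex.I := by
          rw [pow_succ, Complex.I_sq]
          ring
        rw [this]
        push_cast
        ring
      rw [hw]
      simp only [Complex.mul_re, Complex.mul_im, Complex.neg_re, Complex.neg_im,
        Complex.I_re, Complex.I_im, Complex.ofReal_re, Complex.ofReal_im]
      ring_nf
      -- need Re (T t) ≥ 0
      have hn1 : 1 ≤ n := hn
      have hTsplit : T t = 1
          + ∑ k ∈ Finset.Ico 1 n, (Complex.I * (t:ℂ)) ^ k / (Nat.factorial k) := by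
        rw [hTdef]
        simp only []
        rw [Finset.range_eq_Ico, ← Finset.sum_Ico_consecutive _ (Nat.zero_le 1) hn1]
        congr 1
        rw [← Finset.range_eq_Ico]
        simp
      have hR := tail_bound 1 n (by norm_num) t ht0.le ht1
      set R : ℂ := ∑ k ∈ Finset.Ico 1 n, (Complex.I * (t:ℂ)) ^ k / (Nat.factorial k) with hRdef
      have hRre : |R.re| ≤ 2 * t := by
        calc |R.re| ≤ ‖R‖ := Complex.abs_re_le_norm R
          _ ≤ 2 * t ^ 1 / (Nat.factorial 1) := hR
          _ = 2 * t := by norm_num [Nat.factorial]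
      have hTre : 0 ≤ (T t).re := by
        rw [hTsplit]
        simp only [Complex.add_re, Complex.one_re]
        have h1 : -(2*t) ≤ R.re := (abs_le.mp hRre).1
        nlinarith
      rw [neg_nonpos]
      have hpos : (0:ℝ) ≤ t ^ n * ((n.factorial : ℝ))⁻¹ := by positivity
      exact mul_nonneg (mul_nonneg hpos hTre) (by norm_num)
  -- conclude via monotonicity
  refine ⟨1/2, by norm_num, fun y hy => ?_⟩
  obtain ⟨hy0, hy2⟩ := hy
  have hcont : ContinuousOn (fun t => Complex.normSq (S t)) (Set.Icc 0 (1/2)) :=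
    fun t _ => ((hf t).continuousAt).continuousWithinAt
  have hmono : AntitoneOn (fun t => Complex.normSq (S t)) (Set.Icc 0 (1/2)) := by
    apply antitoneOn_of_deriv_nonpos (convex_Icc 0 (1/2)) hcont
    · intro t ht
      rw [interior_Icc] at ht
      exact (hf t).differentiableAt.differentiableWithinAt
    · intro t ht
      rw [interior_Icc] at ht
      rw [(hf t).deriv]
      exact key t ht
  have h1 : Complex.normSq (S y) ≤ Complex.normSq (S 0) :=
    hmono ⟨le_refl 0, by norm_num⟩ ⟨hy0, hy2⟩ hy0
  have hS0 : S 0 = 1 := by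
    rw [hSdef]
    simp only [Complex.ofReal_zero, mul_zero]
    rw [Finset.sum_eq_single 0]
    · simp
    · intro k _ hk0
      rw [zero_pow hk0, zero_div]
    · simp
  rw [hS0, map_one] at h1
  have habs : ‖S y‖ ≤ 1 := by
    rw [Complex.norm_def]
    calc Real.sqrt (Complex.normSq (S y)) ≤ Real.sqrt 1 := Real.sqrt_le_sqrt h1
      _ = 1 := Real.sqrt_one
  exact ⟨hy0, habs⟩
end

section
/- The sequence of polynomials f_m converges uniformly to the function z ↦ −sin(z) on every compact subset of ℂ as m → +∞; that is, for every compact K ⊂ ℂ and every ε > 0 there exists m₀ such that for all m ≥ m₀ and all z ∈ K, |f_m(z) + sin(z)| < ε. -/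
open Finset Filter Topology

/-- The polynomial `f_m(z) = -((4m+1)/2) ∑_{k=1}^{2m} (-1)^{k+1} z^{2k-1} / ((2k-1)!(k+2m))`. -/
noncomputable def f (m : ℕ) (z : ℂ) : ℂ :=
  -((4 * (m : ℂ) + 1) / 2) *
    ∑ k ∈ Finset.Icc 1 (2 * m),
      (-1 : ℂ) ^ (k + 1) * z ^ (2 * k - 1) /
        ((Nat.factorial (2 * k - 1)) * ((k : ℂ) + 2 * (m : ℂ)))

private lemma f_add_partial (m : ℕ) (z : ℂ) :
    f m z + ∑ n ∈ range (2 * m), (-1 : ℂ) ^ n * z ^ (2 * n + 1) / ((2 * n + 1).factorial : ℂ) =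
      ∑ n ∈ range (2 * m), (-1 : ℂ) ^ n * z ^ (2 * n + 1) / ((2 * n + 1).factorial : ℂ) *
        (((2 * n + 1 : ℕ) : ℂ) / ((2 * n + 2 + 4 * m : ℕ) : ℂ)) := by
  rw [f, ← Finset.Ico_add_one_right_eq_Icc, Finset.sum_Ico_eq_sum_range]
  have hrange : 2 * m + 1 - 1 = 2 * m := rfl
  rw [hrange, Finset.mul_sum, ← Finset.sum_add_distrib]
  refine Finset.sum_congr rfl fun n hn => ?_
  have e1 : 2 * (1 + n) - 1 = 2 * n + 1 := by omega
  rw [e1]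
  have hfac : ((2 * n + 1).factorial : ℂ) ≠ 0 :=
    Nat.cast_ne_zero.mpr (Nat.factorial_ne_zero _)
  have hd1 : ((1 + n : ℕ) : ℂ) + 2 * (m : ℂ) ≠ 0 := by
    have : ((1 + n + 2 * m : ℕ) : ℂ) ≠ 0 := Nat.cast_ne_zero.2 (by omega)
    push_cast at this ⊢
    convert this using 2 <;> ring
  have hd2 : ((2 * n + 2 + 4 * m : ℕ) : ℂ) ≠ 0 := Nat.cast_ne_zero.2 (by omega)
  push_cast at hd1 hd2 ⊢
  rw [show (2 * (n : ℂ) + 2 + 4 * m) = 2 * (1 + n + 2 * m) by ring]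
  field_simp
  linear_combination (-2 * z * z ^ (n * 2) * (-1 : ℂ) ^ n) * mul_inv_cancel₀ hd1

/-- The polynomials `f_m` converge uniformly to `-sin` on compact subsets of `ℂ`. -/
theorem f_tendstoUniformlyOn_neg_sin (K : Set ℂ) (hK : IsCompact K) (ε : ℝ) (hε : 0 < ε) :
    ∃ m₀ : ℕ, 0 < m₀ ∧ ∀ m : ℕ, m₀ ≤ m → ∀ z ∈ K,
      ‖f m z + Complex.sin z‖ < ε := by
  obtain ⟨R₀, hR₀⟩ := hK.isBounded.exists_norm_le
  set R : ℝ := max R₀ 0 with hRdef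
  have hR0 : 0 ≤ R := le_max_right _ _
  have hRK : ∀ z ∈ K, ‖z‖ ≤ R := fun z hz => by
    exact (hR₀ z hz).trans (le_max_left _ _)
  set c : ℕ → ℝ := fun j => R ^ j / j.factorial with hcdef
  have hc : Summable c := Real.summable_pow_div_factorial R
  have hcnn : ∀ j, 0 ≤ c j := fun j => by
    simp only [hcdef]; positivity
  set C : ℝ := ∑' j, c j with hCdef
  have hC0 : 0 ≤ C := tsum_nonneg hcnn
  set b : ℕ → ℝ := fun n => R ^ (2 * n + 1) / (2 * n + 1).factorial with hbdef
  have hb : Summable b := hc.comp_injective (fun x y h => by omega)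
  have hbnn : ∀ j, 0 ≤ b j := fun j => by
    simp only [hbdef]; positivity
  have htail : Tendsto (fun i => ∑' k, b (k + i)) atTop (𝓝 0) := tendsto_sum_nat_add b
  obtain ⟨N₀, hN₀⟩ := eventually_atTop.1
    (htail.eventually_lt_const (by linarith : (0 : ℝ) < ε / 2))
  refine ⟨N₀ + ⌈R * C / ε⌉₊ + 1, by omega, fun m hm z hz => ?_⟩
  have hm1 : 1 ≤ m := by omega
  have hmN : N₀ ≤ 2 * m := by omega
  have hmpos : (1 : ℝ) ≤ (m : ℝ) := by exact_mod_cast hm1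
  have hmR : R * C / ε < (m : ℝ) := by
    have h1 : R * C / ε ≤ (⌈R * C / ε⌉₊ : ℝ) := Nat.le_ceil _
    have h2 : ((N₀ + ⌈R * C / ε⌉₊ + 1 : ℕ) : ℝ) ≤ (m : ℝ) := Nat.cast_le.2 hm
    push_cast at h2
    linarith
  have hRC : R * C < (m : ℝ) * ε := (div_lt_iff₀ hε).1 hmR
  set a : ℕ → ℂ := fun n => (-1 : ℂ) ^ n * z ^ (2 * n + 1) / ((2 * n + 1).factorial : ℂ)
    with hadef
  have hsin := Complex.hasSum_sin z
  have hsa : Summable a := hsin.summable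
  have hsplit : ∑ n ∈ range (2 * m), a n + ∑' n, a (n + 2 * m) = Complex.sin z := by
    rw [hsa.sum_add_tsum_nat_add (2 * m), hsin.tsum_eq]
  have key : f m z + ∑ n ∈ range (2 * m), a n =
      ∑ n ∈ range (2 * m), a n *
        (((2 * n + 1 : ℕ) : ℂ) / ((2 * n + 2 + 4 * m : ℕ) : ℂ)) := f_add_partial m z
  have hdecomp : f m z + Complex.sin z =
      (∑ n ∈ range (2 * m), a n *
        (((2 * n + 1 : ℕ) : ℂ) / ((2 * n + 2 + 4 * m : ℕ) : ℂ))) + ∑' n, a (n + 2 * m) := by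
    rw [← hsplit]
    linear_combination key
  -- bound on the main finite sum
  have habsP : ‖∑ n ∈ range (2 * m), a n *
        (((2 * n + 1 : ℕ) : ℂ) / ((2 * n + 2 + 4 * m : ℕ) : ℂ))‖
      ≤ ∑ n ∈ range (2 * m), R * c (2 * n) / (4 * m) := by
    refine (norm_sum_le _ _).trans (Finset.sum_le_sum fun n hn => ?_)
    have hz' : ‖z‖ ≤ R := hRK z hz
    have hzn : ‖z‖ ^ (2 * n + 1) ≤ R ^ (2 * n + 1) :=
      pow_le_pow_left₀ (norm_nonneg z) hz' _
    have hfac : ((2 * n + 1).factorial : ℝ) = ((2 * n + 1 : ℕ) : ℝ) * (2 * n).factorial := by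
      exact_mod_cast Nat.factorial_succ (2 * n)
    have hfacpos : (0 : ℝ) < (2 * n).factorial := by
      exact_mod_cast Nat.factorial_pos (2 * n)
    have hmpos' : (0 : ℝ) < (m : ℝ) := by linarith
    simp only [hadef, norm_mul, norm_div, norm_pow, Complex.norm_natCast]
    have habs1 : ‖(-1 : ℂ)‖ = 1 := by simp
    rw [habs1, one_pow, one_mul]
    have e2 : ((2 * n + 2 + 4 * m : ℕ) : ℝ) = 2 * n + 2 + 4 * m := by push_cast; ring
    have e3 : ((2 * n + 1 : ℕ) : ℝ) = 2 * n + 1 := by push_cast; ring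
    rw [e2, e3, hcdef]
    simp only
    have ht : (2 * (n : ℝ) + 1) ≠ 0 := by positivity
    have hFne : ((2 * n).factorial : ℝ) ≠ 0 := by positivity
    have hDne : (2 * (n : ℝ) + 2 + 4 * (m : ℝ)) ≠ 0 := by positivity
    calc ‖z‖ ^ (2 * n + 1) / ((2 * n + 1).factorial : ℝ) *
          ((2 * (n : ℝ) + 1) / (2 * (n : ℝ) + 2 + 4 * (m : ℝ)))
        = ‖z‖ ^ (2 * n + 1) /
          (((2 * n).factorial : ℝ) * (2 * (n : ℝ) + 2 + 4 * (m : ℝ))) := by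
          rw [hfac, e3]
          field_simp
      _ ≤ R ^ (2 * n + 1) / (((2 * n).factorial : ℝ) * (4 * (m : ℝ))) := by
          gcongr <;> first
            | positivity
            | exact norm_nonneg z
            | exact hz'
            | linarith
      _ = R * (R ^ (2 * n) / (2 * n).factorial) / (4 * m) := by
          rw [pow_succ]
          field_simp
  have hsumc : ∑ n ∈ range (2 * m), c (2 * n) ≤ C := by
    have himg : ∑ n ∈ range (2 * m), c (2 * n)
        = ∑ j ∈ (range (2 * m)).image (fun n => 2 * n), c j :=
      (Finset.sum_image (fun x _ y _ h => by omega)).symm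
    rw [himg]
    exact hc.sum_le_tsum _ (fun j _ => hcnn j)
  have habsP2 : ∑ n ∈ range (2 * m), R * c (2 * n) / (4 * m) ≤ R * C / (4 * m) := by
    rw [← Finset.sum_div, ← Finset.mul_sum]
    have hmpos' : (0 : ℝ) < (m : ℝ) := by linarith
    gcongr
  have hm4 : (0 : ℝ) < 4 * m := by
    have : (0 : ℝ) < (m : ℝ) := by linarith
    linarith
  have hP : R * C / (4 * m) < ε / 2 := by
    rw [div_lt_iff₀ hm4]
    nlinarith
  -- bound on the tail
  have hanorm : ∀ j, ‖a j‖ ≤ b j := fun j => by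
    simp only [hadef, hbdef, norm_mul, norm_div, norm_pow, Complex.norm_natCast]
    have habs1 : ‖(-1 : ℂ)‖ = 1 := by simp
    rw [habs1, one_pow, one_mul]
    have : ‖z‖ ^ (2 * j + 1) ≤ R ^ (2 * j + 1) :=
      pow_le_pow_left₀ (norm_nonneg z) (hRK z hz) _
    gcongr
  have hsb : Summable fun n => b (n + 2 * m) := (summable_nat_add_iff (2 * m)).2 hb
  have hsan : Summable fun n => ‖a (n + 2 * m)‖ :=
    hsb.of_nonneg_of_le (fun n => norm_nonneg _) (fun n => hanorm _)
  have habsT : ‖∑' n, a (n + 2 * m)‖ ≤ ∑' n, b (n + 2 * m) := by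
    calc ‖∑' n, a (n + 2 * m)‖ ≤ ∑' n, ‖a (n + 2 * m)‖ := by
          exact norm_tsum_le_tsum_norm (by simpa using hsan)
      _ ≤ ∑' n, b (n + 2 * m) := hsan.tsum_le_tsum (fun n => hanorm _) hsb
  have htb : ∑' n, b (n + 2 * m) < ε / 2 := hN₀ (2 * m) hmN
  calc ‖f m z + Complex.sin z‖
      ≤ ‖∑ n ∈ range (2 * m), a n *
          (((2 * n + 1 : ℕ) : ℂ) / ((2 * n + 2 + 4 * m : ℕ) : ℂ))‖
        + ‖∑' n, a (n + 2 * m)‖ := by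
        rw [hdecomp]; exact norm_add_le _ _
    _ < ε := by linarith [habsP.trans habsP2]
end

section
/- For every ρ > 0, every positive integer m, and every z ∈ ℂ with |z| ≤ ρ, the difference between f_m and the degree-(4m−1) Maclaurin polynomial of −sin satisfies |f_m(z) − f̃_m(z)| ≤ ρ·cosh(ρ)/(4m), where f̃_m(z) := −∑_{k=0}^{2m−1} (−1)^k z^{2k+1}/(2k+1)!. -/
/-- The degree-`(4m-1)` Maclaurin polynomial of `-sin`:
`f̃_m(z) = -∑_{k=0}^{2m-1} (-1)^k z^{2k+1} / (2k+1)!`. -/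
noncomputable def fTilde (m : ℕ) (z : ℂ) : ℂ :=
  -∑ k ∈ Finset.range (2 * m), (-1 : ℂ) ^ k * z ^ (2 * k + 1) / (Nat.factorial (2 * k + 1))

lemma key (m : ℕ) (z : ℂ) :
    f m z - fTilde m z =
      ∑ k ∈ Finset.range (2 * m),
        (-1 : ℂ) ^ k * z ^ (2 * k + 1) /
          ((((2 * k).factorial * (2 * (k + 2 * m + 1)) : ℕ) : ℂ)) := by
  unfold f fTilde
  rw [← Finset.Ico_add_one_right_eq_Icc, Finset.sum_Ico_eq_sum_range]
  have h2 : 2 * m + 1 - 1 = 2 * m := by omega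
  rw [h2, neg_mul, sub_neg_eq_add, Finset.mul_sum, neg_add_eq_sub,
    ← Finset.sum_sub_distrib]
  apply Finset.sum_congr rfl
  intro k _
  have e1 : 2 * (1 + k) - 1 = 2 * k + 1 := by omega
  rw [e1]
  have hsgn : ((-1 : ℂ)) ^ (1 + k + 1) = (-1) ^ k := by
    have : 1 + k + 1 = k + 2 := by omega
    rw [this, pow_add]; ring
  rw [hsgn]
  have hfac : ((2 * k + 1).factorial : ℂ) = (2 * ↑k + 1) * (2 * k).factorial := by
    rw [Nat.factorial_succ]; push_cast; ring
  have hfpos : ((2 * k).factorial : ℂ) ≠ 0 := by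
    exact_mod_cast (2 * k).factorial_ne_zero
  have hA : ((2 * k + 1).factorial : ℂ) ≠ 0 := by
    exact_mod_cast (2 * k + 1).factorial_ne_zero
  have hdd : (((1 + k : ℕ)) : ℂ) + 2 * m ≠ 0 := by
    have : (((1 + k : ℕ)) : ℂ) + 2 * m = ((1 + k + 2 * m : ℕ) : ℂ) := by push_cast; ring
    rw [this]; exact Nat.cast_ne_zero.2 (by omega)
  have hB : ((2 * k + 1).factorial : ℂ) * (((1 + k : ℕ) : ℂ) + 2 * m) ≠ 0 :=
    mul_ne_zero hA hdd
  have hC : (((2 * k).factorial * (2 * (k + 2 * m + 1)) : ℕ) : ℂ) ≠ 0 :=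
    Nat.cast_ne_zero.2 (by positivity)
  rw [← mul_div_assoc, div_sub_div _ _ hA hB, div_eq_div_iff (mul_ne_zero hA hB) hC]
  push_cast [hfac]
  ring
/-- For `|z| ≤ ρ`, the difference `|f_m(z) - f̃_m(z)|` is at most `ρ cosh ρ / (4m)`. -/
theorem f_sub_fTilde_bound (ρ : ℝ) (hρ : 0 < ρ) (m : ℕ) (hm : 0 < m)
    (z : ℂ) (hz : ‖z‖ ≤ ρ) :
    ‖f m z - fTilde m z‖ ≤ ρ * Real.cosh ρ / (4 * m) := by
  rw [key]
  calc ‖∑ k ∈ Finset.range (2 * m),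
        (-1:ℂ)^k * z^(2*k+1) / ((((2*k).factorial * (2*(k+2*m+1)) : ℕ) : ℂ))‖
      ≤ ∑ k ∈ Finset.range (2 * m),
        ‖(-1:ℂ)^k * z^(2*k+1) / ((((2*k).factorial * (2*(k+2*m+1)) : ℕ) : ℂ))‖ := by
        exact norm_sum_le _ _
    _ ≤ ∑ k ∈ Finset.range (2 * m), ρ ^ (2*k) / (2*k).factorial * (ρ / (4 * m)) := by
        apply Finset.sum_le_sum
        intro k _
        simp only [norm_div, norm_mul, norm_pow, norm_neg, norm_one, one_pow, one_mul,
          Complex.norm_natCast]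
        have hzρ : ‖z‖ ^ (2*k+1) ≤ ρ ^ (2*k+1) :=
          pow_le_pow_left₀ (norm_nonneg z) hz _
        have hden : (4 * (m:ℝ)) * (2*k).factorial ≤ (((2*k).factorial * (2*(k+2*m+1)) : ℕ) : ℝ) := by
          push_cast
          nlinarith [(2*k).factorial_pos, (Nat.cast_pos (α := ℝ)).2 (2*k).factorial_pos,
            (Nat.cast_nonneg (α := ℝ) k)]
        have h4m : (0:ℝ) < 4 * m * (2*k).factorial := by positivity
        calc ‖z‖ ^ (2*k+1) / (((2*k).factorial * (2*(k+2*m+1)) : ℕ) : ℝ)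
            ≤ ρ ^ (2*k+1) / ((4 * m) * (2*k).factorial) := by
              apply div_le_div₀ (by positivity) hzρ h4m hden
          _ = ρ ^ (2*k) / (2*k).factorial * (ρ / (4 * m)) := by
              rw [pow_succ]; field_simp
    _ = (∑ k ∈ Finset.range (2 * m), ρ ^ (2*k) / (2*k).factorial) * (ρ / (4 * m)) := by
        rw [← Finset.sum_mul]
    _ ≤ Real.cosh ρ * (ρ / (4 * m)) := by
        apply mul_le_mul_of_nonneg_right _ (by positivity)
        exact sum_le_hasSum _ (fun k _ => by positivity) (Real.hasSum_cosh ρ)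
    _ = ρ * Real.cosh ρ / (4 * m) := by ring
end

section
/- The Szegő region Σ₁ is a strictly convex subset of ℂ: it is convex, and for any two distinct points z, w ∈ Σ₁ and any t ∈ (0,1), the point t·z + (1−t)·w lies in the interior of Σ₁. -/
/-- The Szegő region `Σ₁ = {z ∈ ℂ : |z e^{1-z}| ≤ 1} ∩ D₁`. -/
noncomputable def Szego : Set ℂ :=
  {z : ℂ | ‖z * Complex.exp (1 - z)‖ ≤ 1} ∩ {z : ℂ | ‖z‖ ≤ 1}

namespace SzegoAux

noncomputable def g (x : ℝ) : ℝ := Real.exp (2 * x - 2) - x ^ 2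

noncomputable def W (x : ℝ) : ℝ := Real.sqrt (g x)

noncomputable def W1 (x : ℝ) : ℝ :=
  (2 * Real.exp (2 * x - 2) - 2 * x) / (2 * Real.sqrt (g x))

def D : Set ℝ := {x : ℝ | x ≤ 1 ∧ 0 ≤ g x}

lemma g_cont : Continuous g := by unfold g; fun_prop

lemma hasDerivAt_g (x : ℝ) :
    HasDerivAt g (2 * Real.exp (2 * x - 2) - 2 * x) x := by
  have h1 : HasDerivAt (fun x : ℝ => 2 * x - 2) 2 x := by
    simpa using ((hasDerivAt_id x).const_mul (2 : ℝ)).sub_const 2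
  have h2 := (Real.hasDerivAt_exp (2 * x - 2)).comp x h1
  have h3 : HasDerivAt (fun x : ℝ => x ^ 2) (2 * x) x := by
    simpa using hasDerivAt_pow 2 x
  have h := h2.sub h3
  unfold g
  exact h.congr_deriv (by ring)

/-- key inequality : `e^t < 1 + t + t^2/2` for `t < 0`, in the form we need. -/
lemma exp_lt {x : ℝ} (hx : x < 1) :
    Real.exp (2 * x - 2) < 2 * x ^ 2 - 2 * x + 1 := by
  have key : ∀ t : ℝ, t < 0 → Real.exp t < 1 + t + t ^ 2 / 2 := by
    intro t ht
    have hf : ∀ y : ℝ, HasDerivAt (fun s : ℝ => 1 + s + s ^ 2 / 2 - Real.exp s)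
        (1 + y - Real.exp y) y := by
      intro y
      have h1 : HasDerivAt (fun s : ℝ => 1 + s) 1 y := by
        simpa using (hasDerivAt_id y).const_add 1
      have h2 : HasDerivAt (fun s : ℝ => s ^ 2 / 2) y y := by
        simpa using (hasDerivAt_pow 2 y).div_const 2
      have h := (h1.add h2).sub (Real.hasDerivAt_exp y)
      exact h
    have anti : StrictAntiOn (fun s : ℝ => 1 + s + s ^ 2 / 2 - Real.exp s) (Set.Iic 0) := by
      apply strictAntiOn_of_deriv_neg (convex_Iic 0) (by fun_prop)
      intro y hy
      rw [interior_Iic] at hy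
      rw [(hf y).deriv]
      have := Real.add_one_lt_exp (ne_of_lt hy)
      linarith
    have h0 := anti (Set.mem_Iic.mpr ht.le) (Set.mem_Iic.mpr le_rfl) ht
    simp only [Real.exp_zero] at h0
    norm_num at h0
    linarith
  have h := key (2 * x - 2) (by linarith)
  have : 1 + (2 * x - 2) + (2 * x - 2) ^ 2 / 2 = 2 * x ^ 2 - 2 * x + 1 := by ring
  linarith

lemma D_convex : Convex ℝ D := by
  rw [convex_iff_ordConnected]
  constructor
  intro a ha b hb c hc
  refine ⟨le_trans hc.2 hb.1, ?_⟩
  by_contra hneg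
  push_neg at hneg
  obtain ⟨m, hm, hmin⟩ := (isCompact_Icc (a := a) (b := b)).exists_isMinOn
    ⟨c, hc⟩ g_cont.continuousOn
  have hgm : g m < 0 := lt_of_le_of_lt (hmin hc) hneg
  have hma : m ≠ a := by rintro rfl; exact absurd ha.2 (not_le.mpr hgm)
  have hmb : m ≠ b := by rintro rfl; exact absurd hb.2 (not_le.mpr hgm)
  have hmo : m ∈ Set.Ioo a b :=
    ⟨lt_of_le_of_ne hm.1 (Ne.symm hma), lt_of_le_of_ne hm.2 hmb⟩
  have hloc : IsLocalMin g m := hmin.isLocalMin (Icc_mem_nhds hmo.1 hmo.2)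
  have hd := hloc.deriv_eq_zero
  rw [(hasDerivAt_g m).deriv] at hd
  have hexp : Real.exp (2 * m - 2) = m := by linarith
  have h0 : 0 < m := hexp ▸ Real.exp_pos _
  have h1 : m ≤ 1 := le_trans hm.2 hb.1
  have hg : g m = m - m ^ 2 := by unfold g; rw [hexp]
  nlinarith

lemma interior_lt_one {x : ℝ} (hx : x ∈ interior D) : x < 1 := by
  have h : interior D ⊆ interior (Set.Iic 1) :=
    interior_mono (fun y hy => hy.1)
  simpa [interior_Iic] using h hx

lemma interior_g_pos {x : ℝ} (hx : x ∈ interior D) : 0 < g x := by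
  rcases lt_or_eq_of_le (interior_subset hx).2 with h | h
  · exact h
  · exfalso
    have hloc : IsLocalMin g x := by
      filter_upwards [isOpen_interior.mem_nhds hx] with y hy
      rw [← h]
      exact (interior_subset hy).2
    have hd := hloc.deriv_eq_zero
    rw [(hasDerivAt_g x).deriv] at hd
    have hx1 : x < 1 := interior_lt_one hx
    have hexp : Real.exp (2 * x - 2) = x := by linarith
    have h0 : 0 < x := hexp ▸ Real.exp_pos _
    have hg : g x = x - x ^ 2 := by unfold g; rw [hexp]
    nlinarith [h.symm]

lemma hasDerivAt_W {x : ℝ} (hg : 0 < g x) : HasDerivAt W (W1 x) x := by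
  have h := (Real.hasDerivAt_sqrt (ne_of_gt hg)).comp x (hasDerivAt_g x)
  unfold W W1
  exact h.congr_deriv (by ring)

lemma W_strictConcave : StrictConcaveOn ℝ D W := by
  apply strictConcaveOn_of_deriv2_neg D_convex
  · exact (Real.continuous_sqrt.comp g_cont).continuousOn
  · intro x hx
    have hg : 0 < g x := interior_g_pos hx
    have hx1 : x < 1 := interior_lt_one hx
    have hev : deriv W =ᶠ[nhds x] W1 := by
      filter_upwards [isOpen_interior.mem_nhds hx] with y hy
      exact (hasDerivAt_W (interior_g_pos hy)).deriv
    have h2 : deriv (deriv W) x = deriv W1 x := hev.deriv_eq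
    set E := Real.exp (2 * x - 2) with hE
    set s := Real.sqrt (g x) with hsdef
    have hs : 0 < s := Real.sqrt_pos.mpr hg
    have hs2 : s ^ 2 = g x := Real.sq_sqrt hg.le
    have hN : HasDerivAt (fun y : ℝ => 2 * Real.exp (2 * y - 2) - 2 * y)
        (4 * E - 2) x := by
      have h := ((hasDerivAt_g x).const_mul (2 : ℝ))
      have heq : (fun y : ℝ => 2 * Real.exp (2 * y - 2) - 2 * y) =
          fun y : ℝ => 2 * g y + 2 * y ^ 2 - 2 * y := by
        funext y; unfold g; ring
      rw [heq]
      have h2 : HasDerivAt (fun y : ℝ => y ^ 2) (2 * x) x := by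
        simpa using hasDerivAt_pow 2 x
      have h3 : HasDerivAt (fun y : ℝ => (2:ℝ) * y) 2 x := by
        simpa using (hasDerivAt_id x).const_mul (2 : ℝ)
      have := (h.add (h2.const_mul 2)).sub h3
      exact this.congr_deriv (by ring)
    have hDn : HasDerivAt (fun y : ℝ => 2 * Real.sqrt (g y)) (2 * W1 x) x := by
      have := (hasDerivAt_W hg).const_mul (2 : ℝ)
      have heq : (fun y : ℝ => 2 * W y) = fun y : ℝ => 2 * Real.sqrt (g y) := rfl
      rw [← heq]
      exact this
    have hDnx : (2 : ℝ) * Real.sqrt (g x) ≠ 0 := by positivity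
    have hdiv := hN.div hDn hDnx
    have hW1 : HasDerivAt W1
        (((4 * E - 2) * (2 * Real.sqrt (g x)) -
          (2 * Real.exp (2 * x - 2) - 2 * x) * (2 * W1 x)) /
          (2 * Real.sqrt (g x)) ^ 2) x := hdiv
    rw [show (deriv^[2] W) x = deriv (deriv W) x from rfl, h2, hW1.deriv]
    have hE0 : 0 < E := Real.exp_pos _
    have hElt : E < 2 * x ^ 2 - 2 * x + 1 := exp_lt hx1
    have hW1val : W1 x = (2 * E - 2 * x) / (2 * s) := rfl
    apply div_neg_of_neg_of_pos
    · rw [hW1val]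
      have key : (4 * E - 2) * (2 * s) - (2 * E - 2 * x) * (2 * ((2 * E - 2 * x) / (2 * s)))
          = ((4 * E - 2) * (2 * s ^ 2) - (2 * E - 2 * x) ^ 2) / s := by
        field_simp
      rw [key]
      apply div_neg_of_neg_of_pos _ hs
      rw [hs2]
      have : g x = E - x ^ 2 := rfl
      rw [this]
      nlinarith
    · positivity

lemma mem_iff (z : ℂ) :
    z ∈ Szego ↔ z.re ^ 2 + z.im ^ 2 ≤ Real.exp (2 * z.re - 2) ∧ z.re ≤ 1 := by
  have habs : ‖z * Complex.exp (1 - z)‖ =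
      ‖z‖ * Real.exp (1 - z.re) := by
    rw [norm_mul, Complex.norm_exp]
    simp [Complex.sub_re]
  have hmul : Real.exp (1 - z.re) * Real.exp (z.re - 1) = 1 := by
    rw [← Real.exp_add]; norm_num
  have hsq : (‖z‖) ^ 2 = z.re ^ 2 + z.im ^ 2 := by
    rw [Complex.sq_norm, Complex.normSq_apply]; ring
  have hesq : (Real.exp (z.re - 1)) ^ 2 = Real.exp (2 * z.re - 2) := by
    rw [sq, ← Real.exp_add]; ring_nf
  have h1le : ‖z‖ * Real.exp (1 - z.re) ≤ 1 ↔
      ‖z‖ ≤ Real.exp (z.re - 1) := by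
    constructor
    · intro h
      have := mul_le_mul_of_nonneg_right h (Real.exp_pos (z.re - 1)).le
      nlinarith [Real.exp_pos (z.re - 1)]
    · intro h
      have := mul_le_mul_of_nonneg_right h (Real.exp_pos (1 - z.re)).le
      nlinarith [Real.exp_pos (1 - z.re)]
  have h2le : ‖z‖ ≤ Real.exp (z.re - 1) ↔
      z.re ^ 2 + z.im ^ 2 ≤ Real.exp (2 * z.re - 2) := by
    rw [← hsq, ← hesq]
    constructor
    · intro h; exact pow_le_pow_left₀ (norm_nonneg z) h 2
    · intro h
      nlinarith [norm_nonneg z, Real.exp_pos (z.re - 1)]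
  constructor
  · rintro ⟨hA, hB⟩
    simp only [Set.mem_setOf_eq] at hA hB
    rw [habs] at hA
    exact ⟨h2le.mp (h1le.mp hA), le_trans (Complex.re_le_norm z) hB⟩
  · rintro ⟨hA, hB⟩
    have habz : ‖z‖ ≤ Real.exp (z.re - 1) := h2le.mpr hA
    constructor
    · show ‖z * Complex.exp (1 - z)‖ ≤ 1
      rw [habs]
      exact h1le.mpr habz
    · show ‖z‖ ≤ 1
      exact le_trans habz (Real.exp_le_one_iff.mpr (by linarith))

end SzegoAux

/-- The Szegő region is strictly convex: it is convex, and every proper convex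
combination of two distinct points of it lies in its interior. -/
theorem Szego_strictly_convex :
    Convex ℝ Szego ∧
    ∀ z ∈ Szego, ∀ w ∈ Szego, z ≠ w → ∀ t : ℝ, 0 < t → t < 1 →
      t • z + (1 - t) • w ∈ interior Szego := by
  have hsc : StrictConvex ℝ Szego := by
    intro z hz w hw hzw a b ha hb hab
    obtain ⟨hz1, hz2⟩ := (SzegoAux.mem_iff z).mp hz
    obtain ⟨hw1, hw2⟩ := (SzegoAux.mem_iff w).mp hw
    set u := a • z + b • w with hu
    have hure : u.re = a * z.re + b * w.re := by
      simp [hu, Complex.add_re, Complex.real_smul, Complex.mul_re]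
    have huim : u.im = a * z.im + b * w.im := by
      simp [hu, Complex.add_im, Complex.real_smul, Complex.mul_im]
    have hgz : z.im ^ 2 ≤ SzegoAux.g z.re := by unfold SzegoAux.g; linarith
    have hgw : w.im ^ 2 ≤ SzegoAux.g w.re := by unfold SzegoAux.g; linarith
    -- the real part of u is < 1
    have hre_lt : u.re < 1 := by
      rcases lt_or_eq_of_le hz2 with h | h
      · rw [hure]; nlinarith
      rcases lt_or_eq_of_le hw2 with h' | h'
      · rw [hure]; nlinarith
      exfalso
      apply hzw
      have hz0 : z.im = 0 := by
        have : Real.exp (2 * z.re - 2) = 1 := by rw [h]; norm_num [Real.exp_zero]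
        nlinarith [sq_nonneg z.im]
      have hw0 : w.im = 0 := by
        have : Real.exp (2 * w.re - 2) = 1 := by rw [h']; norm_num [Real.exp_zero]
        nlinarith [sq_nonneg w.im]
      exact Complex.ext (by rw [h, h']) (by rw [hz0, hw0])
    -- the imaginary part bound
    have him : u.im ^ 2 < SzegoAux.g u.re := by
      by_cases hxx : z.re = w.re
      · have hne : z.im ≠ w.im := by
          intro hii; exact hzw (Complex.ext hxx hii)
        have hc : u.re = z.re := by rw [hure, hxx]; linear_combination w.re * hab
        have hgw' : w.im ^ 2 ≤ SzegoAux.g z.re := by rw [hxx]; exact hgw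
        have hsq : 0 < (z.im - w.im) ^ 2 :=
          lt_of_le_of_ne (sq_nonneg _) (Ne.symm (pow_ne_zero 2 (sub_ne_zero.mpr hne)))
        rw [hc, huim]
        have hid : (a * z.im + b * w.im) ^ 2 =
            a * z.im ^ 2 + b * w.im ^ 2 - a * b * (z.im - w.im) ^ 2 := by
          linear_combination (a * z.im ^ 2 + b * w.im ^ 2) * hab
        have hsum : a * SzegoAux.g z.re + b * SzegoAux.g z.re = SzegoAux.g z.re := by
          linear_combination SzegoAux.g z.re * hab
        nlinarith [mul_pos (mul_pos ha hb) hsq, mul_le_mul_of_nonneg_left hgz ha.le,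
          mul_le_mul_of_nonneg_left hgw' hb.le]
      · have hzD : z.re ∈ SzegoAux.D := ⟨hz2, le_trans (sq_nonneg z.im) hgz⟩
        have hwD : w.re ∈ SzegoAux.D := ⟨hw2, le_trans (sq_nonneg w.im) hgw⟩
        have hconc := SzegoAux.W_strictConcave.2 hzD hwD hxx ha hb hab
        simp only [smul_eq_mul] at hconc
        have h1 : |z.im| ≤ SzegoAux.W z.re := Real.abs_le_sqrt hgz
        have h2 : |w.im| ≤ SzegoAux.W w.re := Real.abs_le_sqrt hgw
        have h3 : |u.im| ≤ a * |z.im| + b * |w.im| := by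
          rw [huim]
          refine (abs_add_le _ _).trans ?_
          rw [abs_mul, abs_mul, abs_of_pos ha, abs_of_pos hb]
        have h4 : |u.im| < SzegoAux.W u.re := by
          rw [hure]
          have e1 : a * |z.im| ≤ a * SzegoAux.W z.re :=
            mul_le_mul_of_nonneg_left h1 ha.le
          have e2 : b * |w.im| ≤ b * SzegoAux.W w.re :=
            mul_le_mul_of_nonneg_left h2 hb.le
          calc |u.im| ≤ a * |z.im| + b * |w.im| := h3
            _ ≤ a * SzegoAux.W z.re + b * SzegoAux.W w.re := by linarith
            _ < SzegoAux.W (a * z.re + b * w.re) := hconc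
        have h5 := (Real.lt_sqrt (abs_nonneg u.im)).mp h4
        rwa [sq_abs] at h5
    -- conclude via an open subset
    have hkey : u.re ^ 2 + u.im ^ 2 < Real.exp (2 * u.re - 2) := by
      have : SzegoAux.g u.re = Real.exp (2 * u.re - 2) - u.re ^ 2 := rfl
      rw [this] at him
      linarith
    have hUopen : IsOpen ({v : ℂ | v.re ^ 2 + v.im ^ 2 < Real.exp (2 * v.re - 2)} ∩
        {v : ℂ | v.re < 1}) := by
      refine IsOpen.inter (isOpen_lt (by fun_prop) (by fun_prop))
        (isOpen_lt (by fun_prop) (by fun_prop))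
    have hUsub : ({v : ℂ | v.re ^ 2 + v.im ^ 2 < Real.exp (2 * v.re - 2)} ∩
        {v : ℂ | v.re < 1}) ⊆ Szego := by
      rintro v ⟨h1, h2⟩
      exact (SzegoAux.mem_iff v).mpr ⟨le_of_lt h1, le_of_lt h2⟩
    exact interior_maximal hUsub hUopen ⟨hkey, hre_lt⟩
  refine ⟨hsc.convex, ?_⟩
  intro z hz w hw hzw t ht ht1
  exact hsc hz hw hzw ht (by linarith) (by ring)
end

section
/- The intersection C_{1/e} ∩ Σ₁ equals the two-point set {i/e, −i/e}. Moreover, for every ρ > 1/e, the intersection C_ρ ∩ Σ₁ is empty and the distance between the sets satisfies |C_ρ, Σ₁| ≥ (ρe − 1)/√(e² + 1). -/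
lemma key_exp (x : ℝ) (hx : x ≤ 1) :
    Real.exp (2 * x) ≤ 1 + 2 * x + (1 + Real.exp 1 ^ 2) * x ^ 2 := by
  have he : (2.7 : ℝ) < Real.exp 1 := by
    have := Real.exp_one_gt_d9; linarith
  have he2 : (7.2 : ℝ) < Real.exp 1 ^ 2 := by nlinarith
  rcases le_or_gt x 0 with h0 | h0
  · have h1 : 1 - 2 * x ≤ Real.exp (-(2 * x)) := by
      have := Real.add_one_le_exp (-(2 * x)); linarith
    have hpos : (0:ℝ) < Real.exp (2 * x) := Real.exp_pos _
    have h2 : Real.exp (2 * x) * (1 - 2 * x) ≤ 1 := by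
      calc Real.exp (2 * x) * (1 - 2 * x) ≤ Real.exp (2 * x) * Real.exp (-(2 * x)) := by
            exact mul_le_mul_of_nonneg_left h1 hpos.le
        _ = 1 := by rw [← Real.exp_add]; simp
    have hA : 1 ≤ (1 + 2 * x + (1 + Real.exp 1 ^ 2) * x ^ 2) * (1 - 2 * x) := by
      nlinarith [sq_nonneg x, mul_nonneg (mul_nonneg (by positivity : (0:ℝ) ≤ 1 + Real.exp 1 ^ 2) (sq_nonneg x)) (neg_nonneg.2 h0)]
    have hx2 : (0:ℝ) < 1 - 2 * x := by linarith
    nlinarith [h2, hA, hx2]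
  · have h3 : Real.exp x ≤ 1 + x + (3/4) * x ^ 2 := by
      have := Real.exp_bound' h0.le hx (n := 2) (by norm_num)
      norm_num [Finset.sum_range_succ] at this
      linarith
    have h4 : Real.exp (2 * x) = Real.exp x * Real.exp x := by
      rw [← Real.exp_add]; ring_nf
    have h5 : Real.exp (2*x) ≤ (1 + x + (3/4) * x ^ 2) ^ 2 := by
      rw [h4]; nlinarith [Real.exp_pos x]
    nlinarith [h5, he2, mul_nonneg (sq_nonneg x) (sub_nonneg.2 hx),
      mul_nonneg (mul_nonneg (sq_nonneg x) h0.le) (sub_nonneg.2 hx),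
      mul_nonneg (sq_nonneg x) (sq_nonneg x)]

lemma sq_dist (p q x y ρ : ℝ) (hp : p ≤ 0) (hx : 0 ≤ x) (hasq : p ^ 2 + q ^ 2 = ρ ^ 2)
    (hdot : q * y ≤ ρ * |y|) :
    x ^ 2 + (ρ - |y|) ^ 2 ≤ (p - x) ^ 2 + (q - y) ^ 2 := by
  nlinarith [sq_abs y, mul_nonneg (neg_nonneg.2 hp) hx]

lemma dist_calc (E S x t d ρ : ℝ) (hE : 0 < E) (hS : 0 < S) (hS2 : S ^ 2 = E ^ 2 + 1)
    (hx : 0 ≤ x) (hρe : 1 < ρ * E) (hlow : ρ * E - 1 ≤ x + E * t) (hd : 0 ≤ d)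
    (hdsq : x ^ 2 + t ^ 2 ≤ d ^ 2) : (ρ * E - 1) / S ≤ d := by
  have h1 : (ρ * E - 1) ^ 2 ≤ (x + E * t) ^ 2 := by
    nlinarith [mul_nonneg (sub_nonneg.2 hlow) (by linarith : (0:ℝ) ≤ x + E * t + (ρ * E - 1))]
  have h2 : (x + E * t) ^ 2 ≤ (E ^ 2 + 1) * (x ^ 2 + t ^ 2) := by
    nlinarith [sq_nonneg (E * x - t)]
  have h3 : (ρ * E - 1) ^ 2 ≤ (S * d) ^ 2 := by
    have : (E ^ 2 + 1) * (x ^ 2 + t ^ 2) ≤ (E ^ 2 + 1) * d ^ 2 := by nlinarith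
    calc (ρ * E - 1) ^ 2 ≤ (E ^ 2 + 1) * d ^ 2 := by linarith
      _ = (S * d) ^ 2 := by rw [mul_pow, hS2]
  have h4 : ρ * E - 1 ≤ S * d := by
    nlinarith [mul_nonneg hS.le hd, h3]
  rw [div_le_iff₀ hS]; linarith

/-- The half circular arc of radius `ρ` in the closed left half-plane. -/
def C (ρ : ℝ) : Set ℂ := {z : ℂ | ‖z‖ = ρ ∧ z.re ≤ 0}

lemma szego_abs {b : ℂ} (hb : b ∈ Szego) :
    Real.exp 1 * ‖b‖ ≤ Real.exp b.re := by
  obtain ⟨hb1, hb2⟩ := hb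
  have h1 : ‖b‖ * Real.exp (1 - b.re) ≤ 1 := by
    simpa [norm_mul, Complex.norm_exp, Complex.sub_re] using hb1
  have h2 : Real.exp (1 - b.re) * Real.exp b.re = Real.exp 1 := by
    rw [← Real.exp_add]; ring_nf
  have h3 := Real.exp_pos b.re
  nlinarith [Real.exp_pos (1 - b.re), norm_nonneg b]

lemma szego_line {b : ℂ} (hb : b ∈ Szego) :
    Real.exp 1 * |b.im| ≤ 1 + b.re := by
  have hb2 : ‖b‖ ≤ 1 := hb.2
  have habs := szego_abs hb
  have hre1 : |b.re| ≤ 1 := (Complex.abs_re_le_norm b).trans hb2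
  have hsq : ‖b‖ ^ 2 = b.re ^ 2 + b.im ^ 2 := by
    rw [Complex.sq_norm, Complex.normSq_apply]; ring
  have hE : (Real.exp 1 * ‖b‖) ^ 2 ≤ Real.exp (2 * b.re) := by
    rw [show (2 : ℝ) * b.re = b.re + b.re by ring, Real.exp_add]
    have h0 : (0:ℝ) ≤ Real.exp 1 * ‖b‖ := by positivity
    nlinarith [Real.exp_pos b.re]
  have hkey := key_exp b.re (by linarith [abs_le.1 hre1])
  have h2 : (Real.exp 1 * |b.im|) ^ 2 ≤ (1 + b.re) ^ 2 := by
    have : Real.exp 1 ^ 2 * (b.re ^ 2 + b.im ^ 2) ≤ Real.exp (2 * b.re) := by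
      nlinarith [hE]
    nlinarith [sq_abs b.im]
  have h1re : (0:ℝ) ≤ 1 + b.re := by linarith [abs_le.1 hre1]
  have h0 : (0:ℝ) ≤ Real.exp 1 * |b.im| := by positivity
  nlinarith [h2, h0, h1re]

set_option maxHeartbeats 1000000 in
/-- `C_{1/e} ∩ Σ₁ = {i/e, -i/e}`; and for every `ρ > 1/e`, `C_ρ ∩ Σ₁ = ∅` and
the distance between `C_ρ` and `Σ₁` is at least `(ρ e - 1)/√(e² + 1)`. -/
theorem C_inter_Szego :
    C (1 / Real.exp 1) ∩ Szego =
      ({Complex.I / (Real.exp 1 : ℂ), -(Complex.I / (Real.exp 1 : ℂ))} : Set ℂ) ∧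
    ∀ ρ : ℝ, 1 / Real.exp 1 < ρ →
      (C ρ ∩ Szego = ∅ ∧
        ∀ a ∈ C ρ, ∀ b ∈ Szego,
          (ρ * Real.exp 1 - 1) / Real.sqrt (Real.exp 1 ^ 2 + 1) ≤ ‖a - b‖) := by
  have he : (2.7 : ℝ) < Real.exp 1 := by
    have := Real.exp_one_gt_d9; linarith
  have hepos : (0:ℝ) < Real.exp 1 := Real.exp_pos 1
  have hIre : (Complex.I / (Real.exp 1 : ℂ)).re = 0 := by
    rw [Complex.div_ofReal_re, Complex.I_re, zero_div]
  have hIim : (Complex.I / (Real.exp 1 : ℂ)).im = 1 / Real.exp 1 := by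
    rw [Complex.div_ofReal_im, Complex.I_im, one_div]
  have hIabs : ‖Complex.I / (Real.exp 1 : ℂ)‖ = 1 / Real.exp 1 := by
    rw [norm_div, Complex.norm_I, Complex.norm_real, Real.norm_of_nonneg hepos.le]
  constructor
  · ext z
    simp only [Set.mem_inter_iff, Set.mem_insert_iff, Set.mem_singleton_iff]
    constructor
    · rintro ⟨⟨hz1, hz2⟩, hz3, hz4⟩
      have h1 : ‖z‖ * Real.exp (1 - z.re) ≤ 1 := by
        simpa [norm_mul, Complex.norm_exp, Complex.sub_re] using hz3
      rw [hz1] at h1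
      have h2 : Real.exp (1 - z.re) ≤ Real.exp 1 := by
        rw [div_mul_eq_mul_div, one_mul, div_le_one hepos] at h1
        exact h1
      have h3 : (0:ℝ) ≤ z.re := by
        have := Real.exp_le_exp.1 h2; linarith
      have hre0 : z.re = 0 := le_antisymm hz2 h3
      have him : z.im ^ 2 = (1 / Real.exp 1) ^ 2 := by
        have := Complex.sq_norm z
        rw [hz1, Complex.normSq_apply, hre0] at this
        nlinarith [this]
      have habs : |z.im| = 1 / Real.exp 1 := by
        rw [← Real.sqrt_sq_eq_abs, him, Real.sqrt_sq (by positivity)]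
      rcases (abs_eq (by positivity : (0:ℝ) ≤ 1 / Real.exp 1)).1 habs with h | h
      · left; apply Complex.ext
        · rw [hre0, hIre]
        · rw [h, hIim]
      · right; apply Complex.ext
        · rw [hre0, Complex.neg_re, hIre, neg_zero]
        · rw [h, Complex.neg_im, hIim]
    · have hmem : ∀ w : ℂ, ‖w‖ = 1 / Real.exp 1 → w.re = 0 → w ∈ C (1 / Real.exp 1) ∩ Szego := by
        intro w hw1 hw2
        refine ⟨⟨hw1, le_of_eq hw2⟩, ?_, ?_⟩
        · show ‖w * Complex.exp (1 - w)‖ ≤ 1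
          rw [norm_mul, Complex.norm_exp, Complex.sub_re, Complex.one_re, hw1, hw2, sub_zero,
            one_div, inv_mul_cancel₀ hepos.ne']
        · show ‖w‖ ≤ 1
          rw [hw1, div_le_one hepos]; linarith
      rintro (rfl | rfl)
      · exact hmem _ hIabs hIre
      · refine hmem _ ?_ ?_
        · rw [norm_neg, hIabs]
        · rw [Complex.neg_re, hIre, neg_zero]
  · intro ρ hρ
    have hρpos : (0:ℝ) < ρ := lt_trans (by positivity) hρ
    have hρe : 1 < ρ * Real.exp 1 := by
      rw [div_lt_iff₀ hepos] at hρ; linarith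
    constructor
    · ext z
      simp only [Set.mem_inter_iff, Set.mem_empty_iff_false, iff_false]
      rintro ⟨⟨hz1, hz2⟩, hz3⟩
      have h1 := szego_abs hz3
      rw [hz1] at h1
      have h2 : Real.exp z.re ≤ 1 := by
        rw [← Real.exp_zero]; exact Real.exp_le_exp.2 hz2
      nlinarith
    · rintro a ⟨ha1, ha2⟩ b hb
      set S := Real.sqrt (Real.exp 1 ^ 2 + 1) with hS
      have hSsq : S ^ 2 = Real.exp 1 ^ 2 + 1 := Real.sq_sqrt (by positivity)
      have hSpos : (0:ℝ) < S := Real.sqrt_pos.2 (by positivity)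
      have heS : Real.exp 1 ≤ S := by nlinarith [hSsq, hSpos]
      have hd : (0:ℝ) ≤ ‖a - b‖ := norm_nonneg _
      have hline := szego_line hb
      have habs := szego_abs hb
      rcases lt_or_ge b.re 0 with hbre | hbre
      · have h1 : Real.exp b.re ≤ 1 := by
          rw [← Real.exp_zero]; exact Real.exp_le_exp.2 hbre.le
        have h2 : ‖b‖ ≤ 1 / Real.exp 1 := by
          rw [le_div_iff₀ hepos]; nlinarith
        have h3 : ρ - 1 / Real.exp 1 ≤ ‖a - b‖ := by
          have := norm_sub_norm_le a b
          rw [ha1] at this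
          linarith
        calc (ρ * Real.exp 1 - 1) / S ≤ (ρ * Real.exp 1 - 1) / Real.exp 1 := by
              apply div_le_div_of_nonneg_left (by linarith) hepos heS
          _ = ρ - 1 / Real.exp 1 := by field_simp
          _ ≤ _ := h3
      · have hasq : a.re ^ 2 + a.im ^ 2 = ρ ^ 2 := by
          have := Complex.sq_norm a
          rw [ha1, Complex.normSq_apply] at this
          nlinarith [this]
        have haim : |a.im| ≤ ρ := by
          rw [← Real.sqrt_sq_eq_abs, ← Real.sqrt_sq hρpos.le]
          exact Real.sqrt_le_sqrt (by nlinarith [sq_nonneg a.re])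
        have hdot : a.im * b.im ≤ ρ * |b.im| := by
          calc a.im * b.im ≤ |a.im * b.im| := le_abs_self _
            _ = |a.im| * |b.im| := abs_mul _ _
            _ ≤ ρ * |b.im| := mul_le_mul_of_nonneg_right haim (abs_nonneg _)
        have hre2 : ‖a - b‖ ^ 2 = (a.re - b.re) ^ 2 + (a.im - b.im) ^ 2 := by
          rw [Complex.sq_norm, Complex.normSq_apply, Complex.sub_re, Complex.sub_im]; ring
        have hdsq : b.re ^ 2 + (ρ - |b.im|) ^ 2 ≤ ‖a - b‖ ^ 2 := by
          rw [hre2]; exact sq_dist a.re a.im b.re b.im ρ ha2 hbre hasq hdot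
        have hlow : ρ * Real.exp 1 - 1 ≤ b.re + Real.exp 1 * (ρ - |b.im|) := by
          linarith [hline]
        exact dist_calc (Real.exp 1) S b.re (ρ - |b.im|) (‖a - b‖) ρ
          hepos hSpos hSsq hbre hρe hlow hd hdsq
end
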